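/- arXiv:1305.5128 — 4 statements merged into one kernel-verified Lean document; each statement's English description precedes it below -/
import Mathlib

section
/- Under the hypotheses making σ^{σ_j} defined (indices i < j with σ_i < σ_j, all entries before position i greater than σ_j, all entries strictly between positions i and j less than σ_i, and σ 132-avoiding), one necessarily has σ_j = σ_i + 1. -/
/-- A permutation `σ` of `{0,…,n-1}` is 132-avoiding if there are no indices
`a < b < c` with `σ a < σ c < σ b`. -/
def Avoids132 {n : ℕ} (σ : Equiv.Perm (Fin n)) : Prop :=
  ¬ ∃ a b c : Fin n, a < b ∧ b < c ∧ σ a < σ c ∧ σ c < σ b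

/-- `s` is an occurrence of the pattern `τ` in `σ`: a strictly increasing choice of
positions whose values are order-isomorphic to `τ`. -/
def IsOccurrence {k n : ℕ} (τ : Equiv.Perm (Fin k)) (σ : Equiv.Perm (Fin n))
    (s : Fin k → Fin n) : Prop :=
  StrictMono s ∧ ∀ a b : Fin k, σ (s a) < σ (s b) ↔ τ a < τ b

/-- The number of occurrences of the pattern `τ` in `σ`. -/
noncomputable def numOcc {k n : ℕ} (τ : Equiv.Perm (Fin k)) (σ : Equiv.Perm (Fin n)) : ℕ :=
  Nat.card {s : Fin k → Fin n // IsOccurrence τ σ s}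

open scoped Classical in
/-- `pop n τ` is `A_n(τ)`: the total number of occurrences of the pattern `τ`
over all 132-avoiding permutations of length `n`. -/
noncomputable def pop (n : ℕ) {k : ℕ} (τ : Equiv.Perm (Fin k)) : ℕ :=
  ∑ σ : Equiv.Perm (Fin n), if Avoids132 σ then numOcc τ σ else 0

/-- The move `σ^{σ_j}` is defined at positions `i < j`. -/
def MoveAt {n : ℕ} (σ : Equiv.Perm (Fin n)) (i j : Fin n) : Prop :=
  i < j ∧ σ i < σ j ∧ (∀ a : Fin n, a < i → σ j < σ a) ∧
    (∀ b : Fin n, i < b → b < j → σ b < σ i)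

/-- `φ = σ^{σ_j}`: the move is defined at `i < j` and `φ` is obtained from `σ` by removing
the entry at position `j` and reinserting it immediately before position `i`. -/
def IsShift {n : ℕ} (σ φ : Equiv.Perm (Fin n)) (i j : Fin n) : Prop :=
  MoveAt σ i j ∧
  (∀ t : Fin n, t < i → φ t = σ t) ∧ φ i = σ j ∧
  (∀ t : Fin n, i ≤ t → ∀ h : t < j,
    φ ⟨(t : ℕ) + 1, Nat.lt_of_le_of_lt (Nat.succ_le_of_lt (Fin.lt_def.mp h)) j.isLt⟩ = σ t) ∧
  (∀ t : Fin n, j < t → φ t = σ t)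

/-- The pattern 213 (zero-indexed one-line notation 1,0,2). -/
def p213 : Equiv.Perm (Fin 3) := Equiv.swap 0 1
/-- The pattern 231 (zero-indexed one-line notation 1,2,0). -/
def p231 : Equiv.Perm (Fin 3) := finRotate 3
/-- The pattern 312 (zero-indexed one-line notation 2,0,1). -/
def p312 : Equiv.Perm (Fin 3) := (finRotate 3)⁻¹
/-- The pattern 3241 (zero-indexed one-line notation 2,1,3,0). -/
def p3241 : Equiv.Perm (Fin 4) := ⟨![2,1,3,0], ![3,1,0,2], by decide, by decide⟩
/-- The pattern 3421 (zero-indexed one-line notation 2,3,1,0). -/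
def p3421 : Equiv.Perm (Fin 4) := ⟨![2,3,1,0], ![3,2,0,1], by decide, by decide⟩
/-- The pattern 324, order-isomorphic to 213. -/
def p324 : Equiv.Perm (Fin 3) := Equiv.swap 0 1
/-- The pattern 342, order-isomorphic to 231. -/
def p342 : Equiv.Perm (Fin 3) := finRotate 3
/-- The decreasing pattern of length 2. -/
def p21 : Equiv.Perm (Fin 2) := Equiv.swap 0 1
/-- The increasing pattern of length 2. -/
def p12 : Equiv.Perm (Fin 2) := 1
/-- The single-letter pattern. -/
def p1 : Equiv.Perm (Fin 1) := 1

/-- `Cm m = |S_m(132)|`, the number of 132-avoiding permutations of length `m`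
(the `m`-th Catalan number). -/
noncomputable def Cm (m : ℕ) : ℕ := Nat.card {σ : Equiv.Perm (Fin m) // Avoids132 σ}

/-- Fuelled construction of the binary tree of a sequence: root at the maximum entry,
left/right subtrees built recursively from the parts left/right of the maximum. -/
def toTreeAux : ℕ → List ℕ → Tree Unit
  | 0, _ => Tree.nil
  | _ + 1, [] => Tree.nil
  | fuel + 1, l =>
    let m := l.idxOf (l.foldr max 0)
    Tree.node () (toTreeAux fuel (l.take m)) (toTreeAux fuel (l.drop (m + 1)))

/-- The (unlabelled) binary tree associated to a sequence of distinct naturals. -/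
def toTree (l : List ℕ) : Tree Unit := toTreeAux l.length l

/-- The binary tree `T(σ)` associated to a permutation `σ`. -/
def treeOf {n : ℕ} (σ : Equiv.Perm (Fin n)) : Tree Unit :=
  toTree (List.ofFn fun i => (σ i : ℕ))

/-- Labelled version of `toTreeAux`, storing the value at each vertex. -/
def toTreeLAux : ℕ → List ℕ → Tree ℕ
  | 0, _ => Tree.nil
  | _ + 1, [] => Tree.nil
  | fuel + 1, l =>
    let m := l.idxOf (l.foldr max 0)
    Tree.node (l.foldr max 0) (toTreeLAux fuel (l.take m)) (toTreeLAux fuel (l.drop (m + 1)))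

/-- The labelled binary tree associated to a sequence of distinct naturals. -/
def toTreeL (l : List ℕ) : Tree ℕ := toTreeLAux l.length l

/-- The labelled binary tree `T(σ)` associated to a permutation `σ`, vertices
labelled by the values of `σ`. -/
def treeOfL {n : ℕ} (σ : Equiv.Perm (Fin n)) : Tree ℕ :=
  toTreeL (List.ofFn fun i => (σ i : ℕ))

/-- `spineAux t = (r, S)` where `r` is the number of vertices on the spine through the
root of `t` (following right children) and `S` is the multiset of sizes of all the
other spines (components after deleting all left-child edges). -/
def spineAux {α : Type*} : Tree α → ℕ × Multiset ℕ
  | BinaryTree.nil => (0, 0)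
  | BinaryTree.node _ L R =>
    let aL := spineAux L
    let aR := spineAux R
    (aR.1 + 1, (if aL.1 = 0 then aL.2 else aL.1 ::ₘ aL.2) + aR.2)

/-- The spine structure of a binary tree: the multiset of sizes of the connected
components obtained after deleting every edge joining a left child to its parent. -/
def spineStructure {α : Type*} (t : Tree α) : Multiset ℕ :=
  let a := spineAux t
  if a.1 = 0 then a.2 else a.1 ::ₘ a.2

/-- `RefinementLE b a` means `b ≤_R a` in refinement order: `a` can be obtained from `b`
by merging (nonempty) subsets of its parts. -/
def RefinementLE (b a : Multiset ℕ) : Prop :=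
  ∃ P : Multiset (Multiset ℕ), (∀ m ∈ P, m ≠ 0) ∧ P.sum = b ∧ P.map Multiset.sum = a

/-- The label of the root of a labelled tree, if any. -/
def rootLabel? : Tree ℕ → Option ℕ
  | BinaryTree.nil => none
  | BinaryTree.node v _ _ => some v

/-- `IsParent t p c`: in the labelled tree `t`, the vertex labelled `p` is the parent of
the vertex labelled `c`. -/
def IsParent : Tree ℕ → ℕ → ℕ → Prop
  | BinaryTree.nil, _, _ => False
  | BinaryTree.node v L R, p, c =>
      (p = v ∧ (rootLabel? L = some c ∨ rootLabel? R = some c)) ∨ IsParent L p c ∨ IsParent R p c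

/-- when the move `σ^{σ_j}` is defined, `σ_j = σ_i + 1`. -/
theorem shift_val_succ {n : ℕ} (σ : Equiv.Perm (Fin n)) (i j : Fin n)
    (hσ : Avoids132 σ) (h : MoveAt σ i j) : (σ j : ℕ) = (σ i : ℕ) + 1 := by
  obtain ⟨hij, h1, h2, h3⟩ := h
  by_contra hne
  have hlt : (σ i : ℕ) + 1 < (σ j : ℕ) := lt_of_le_of_ne (Nat.succ_le_of_lt h1) (Ne.symm hne)
  have hvn : (σ i : ℕ) + 1 < n := lt_trans hlt (σ j).isLt
  set v : Fin n := ⟨(σ i : ℕ) + 1, hvn⟩ with hv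
  set k : Fin n := σ⁻¹ v with hk
  have hσk : σ k = v := σ.apply_symm_apply v
  have hki : k ≠ i := by
    intro hh; rw [hh] at hσk
    have : (σ i : ℕ) = (σ i : ℕ) + 1 := congrArg Fin.val hσk
    omega
  have hkj : k ≠ j := by
    intro hh; rw [hh] at hσk
    have : (σ j : ℕ) = (σ i : ℕ) + 1 := congrArg Fin.val hσk
    omega
  have hσkv : (σ k : ℕ) = (σ i : ℕ) + 1 := by rw [hσk]
  rcases lt_trichotomy k i with hc | hc | hc
  · have := h2 k hc
    have : (σ j : ℕ) < (σ k : ℕ) := this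
    omega
  · exact hki hc
  · rcases lt_trichotomy k j with hd | hd | hd
    · have := h3 k hc hd
      have : (σ k : ℕ) < (σ i : ℕ) := this
      omega
    · exact hkj hd
    · exact hσ ⟨i, j, k, hij, hd, by
        constructor
        · show σ i < σ k; exact Fin.lt_def.mpr (by omega)
        · show σ k < σ j; exact Fin.lt_def.mpr (by omega)⟩
end

section
/- For every n ≥ 3, the popularities of the three patterns 213, 231, 312 among 132-avoiding permutations of length n are equal: A_n(213) = A_n(231) = A_n(312). -/
@[simp]
theorem Equiv.Perm.inv_apply_self {α : Type*} (f : Equiv.Perm α) (x : α) : f⁻¹ (f x) = x :=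
  Equiv.symm_apply_apply f x

@[simp]
theorem Equiv.Perm.apply_inv_self {α : Type*} (f : Equiv.Perm α) (x : α) : f (f⁻¹ x) = x :=
  Equiv.apply_symm_apply f x

namespace PopWork
open Equiv Finset

variable {a b : ℕ}

def gf (α : Perm (Fin a)) (β : Perm (Fin b)) (i : Fin (a+1+b)) : Fin (a+1+b) :=
  if h : (i : ℕ) < a then ⟨b + (α ⟨i, h⟩ : ℕ), by have := (α ⟨i, h⟩).isLt; omega⟩
  else if h2 : (i : ℕ) = a then ⟨a + b, by omega⟩
  else ⟨(β ⟨(i : ℕ) - (a+1), by have := i.isLt; omega⟩ : ℕ), by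
    have := (β ⟨(i : ℕ) - (a+1), by have := i.isLt; omega⟩).isLt; omega⟩

def gg (α : Perm (Fin a)) (β : Perm (Fin b)) (v : Fin (a+1+b)) : Fin (a+1+b) :=
  if h : (v : ℕ) < b then ⟨a + 1 + (β⁻¹ ⟨v, h⟩ : ℕ), by have := (β⁻¹ ⟨v, h⟩).isLt; omega⟩
  else if h2 : (v : ℕ) < a + b then ⟨(α⁻¹ ⟨(v : ℕ) - b, by omega⟩ : ℕ), by
    have := (α⁻¹ ⟨(v : ℕ) - b, by omega⟩).isLt; omega⟩
  else ⟨a, by omega⟩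

variable (α : Perm (Fin a)) (β : Perm (Fin b))

lemma gf_left (i : Fin (a+1+b)) (h : (i : ℕ) < a) :
    (gf α β i : ℕ) = b + (α ⟨i, h⟩ : ℕ) := by rw [gf, dif_pos h]

lemma gf_mid (i : Fin (a+1+b)) (h : (i : ℕ) = a) : (gf α β i : ℕ) = a + b := by
  rw [gf, dif_neg (by omega), dif_pos h]

lemma gf_right (i : Fin (a+1+b)) (h : a < (i : ℕ)) :
    (gf α β i : ℕ) = (β ⟨(i : ℕ) - (a+1), by have := i.isLt; omega⟩ : ℕ) := by
  rw [gf, dif_neg (by omega), dif_neg (by omega)]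

lemma gg_small (v : Fin (a+1+b)) (h : (v : ℕ) < b) :
    (gg α β v : ℕ) = a + 1 + (β⁻¹ ⟨v, h⟩ : ℕ) := by rw [gg, dif_pos h]

lemma gg_big (v : Fin (a+1+b)) (h1 : b ≤ (v : ℕ)) (h2 : (v : ℕ) < a + b) :
    (gg α β v : ℕ) = (α⁻¹ ⟨(v : ℕ) - b, by omega⟩ : ℕ) := by
  rw [gg, dif_neg (by omega), dif_pos h2]

lemma gg_max (v : Fin (a+1+b)) (h : (v : ℕ) = a + b) : (gg α β v : ℕ) = a := by
  rw [gg, dif_neg (by omega), dif_neg (by omega)]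

def glue : Perm (Fin (a+1+b)) where
  toFun := gf α β
  invFun := gg α β
  left_inv i := by
    apply Fin.ext
    rcases lt_trichotomy (i : ℕ) a with h | h | h
    · have h1 := gf_left α β i h
      have h2 : (gg α β (gf α β i) : ℕ)
          = (α⁻¹ ⟨(gf α β i : ℕ) - b, by have := (α ⟨i,h⟩).isLt; omega⟩ : ℕ) :=
        gg_big α β _ (by omega) (by have := (α ⟨i,h⟩).isLt; omega)
      rw [h2]
      have h3 : (⟨(gf α β i : ℕ) - b, by have := (α ⟨i,h⟩).isLt; omega⟩ : Fin a) = α ⟨i, h⟩ := by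
        apply Fin.ext; simp [h1]
      rw [h3, Equiv.Perm.inv_apply_self]
    · have h1 := gf_mid α β i h
      rw [gg_max α β _ h1, h]
    · have h1 := gf_right α β i h
      have hlt : ((β ⟨(i : ℕ) - (a+1), by have := i.isLt; omega⟩ : Fin b) : ℕ) < b := Fin.isLt _
      have h2 := gg_small α β (gf α β i) (by rw [h1]; exact hlt)
      rw [h2]
      have h3 : (⟨(gf α β i : ℕ), by rw [h1]; exact hlt⟩ : Fin b)
          = β ⟨(i : ℕ) - (a+1), by have := i.isLt; omega⟩ := by apply Fin.ext; simp [h1]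
      rw [h3, Equiv.Perm.inv_apply_self]
      simp only [Fin.val_mk]
      have := i.isLt; omega
  right_inv v := by
    apply Fin.ext
    rcases lt_trichotomy (v : ℕ) b with h | h | h
    · have h1 := gg_small α β v h
      have h2 := gf_right α β (gg α β v) (by omega)
      rw [h2]
      have h3 : (⟨(gg α β v : ℕ) - (a+1), by have := (gg α β v).isLt; omega⟩ : Fin b)
          = β⁻¹ ⟨v, h⟩ := by apply Fin.ext; simp [h1]
      rw [h3, Equiv.Perm.apply_inv_self]
    · rcases lt_or_ge (v : ℕ) (a + b) with h2 | h2
      · have h1 := gg_big α β v (by omega) h2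
        have hlt : ((α⁻¹ ⟨(v : ℕ) - b, by omega⟩ : Fin a) : ℕ) < a := Fin.isLt _
        have h4 := gf_left α β (gg α β v) (by rw [h1]; exact hlt)
        rw [h4]
        have h3 : (⟨(gg α β v : ℕ), by rw [h1]; exact hlt⟩ : Fin a) = α⁻¹ ⟨(v : ℕ) - b, by omega⟩ := by
          apply Fin.ext; simp [h1]
        rw [h3, Equiv.Perm.apply_inv_self]
        simp only [Fin.val_mk]
        omega
      · have h1 := gg_max α β v (by have := v.isLt; omega)
        rw [gf_mid α β _ h1]
        have := v.isLt; omega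
    · rcases lt_or_ge (v : ℕ) (a + b) with h2 | h2
      · have h1 := gg_big α β v (by omega) h2
        have hlt : ((α⁻¹ ⟨(v : ℕ) - b, by omega⟩ : Fin a) : ℕ) < a := Fin.isLt _
        have h4 := gf_left α β (gg α β v) (by rw [h1]; exact hlt)
        rw [h4]
        have h3 : (⟨(gg α β v : ℕ), by rw [h1]; exact hlt⟩ : Fin a) = α⁻¹ ⟨(v : ℕ) - b, by omega⟩ := by
          apply Fin.ext; simp [h1]
        rw [h3, Equiv.Perm.apply_inv_self]
        simp only [Fin.val_mk]
        omega
      · have h1 := gg_max α β v (by have := v.isLt; omega)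
        rw [gf_mid α β _ h1]
        have := v.isLt; omega

lemma glue_left (i : Fin (a+1+b)) (h : (i : ℕ) < a) :
    (glue α β i : ℕ) = b + (α ⟨i, h⟩ : ℕ) := gf_left α β i h

lemma glue_mid (i : Fin (a+1+b)) (h : (i : ℕ) = a) : (glue α β i : ℕ) = a + b := gf_mid α β i h

lemma glue_right (i : Fin (a+1+b)) (h : a < (i : ℕ)) :
    (glue α β i : ℕ) = (β ⟨(i : ℕ) - (a+1), by have := i.isLt; omega⟩ : ℕ) := gf_right α β i h

lemma glue_lt_b {i : Fin (a+1+b)} (h : a < (i : ℕ)) : (glue α β i : ℕ) < b := by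
  rw [glue_right α β i h]; exact Fin.isLt _

lemma glue_ge_b {i : Fin (a+1+b)} (h : (i : ℕ) < a) : b ≤ (glue α β i : ℕ) := by
  rw [glue_left α β i h]; omega

lemma glue_lt_ab {i : Fin (a+1+b)} (h : (i : ℕ) ≠ a) : (glue α β i : ℕ) < a + b := by
  rcases lt_or_gt_of_ne h with h' | h'
  · rw [glue_left α β i h']; have := (α ⟨(i:ℕ), h'⟩).isLt; omega
  · have := glue_lt_b α β h'; omega

/-- position embeddings -/
def emL (i : Fin a) : Fin (a+1+b) := ⟨(i : ℕ), by have := i.isLt; omega⟩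
def emR (j : Fin b) : Fin (a+1+b) := ⟨a + 1 + (j : ℕ), by have := j.isLt; omega⟩
def emM : Fin (a+1+b) := ⟨a, by omega⟩

@[simp] lemma emL_val (i : Fin a) : ((emL i : Fin (a+1+b)) : ℕ) = i := rfl
@[simp] lemma emR_val (j : Fin b) : ((emR j : Fin (a+1+b)) : ℕ) = a + 1 + j := rfl
@[simp] lemma emM_val : ((emM : Fin (a+1+b)) : ℕ) = a := rfl

lemma glue_emL (i : Fin a) : (glue α β (emL i) : ℕ) = b + (α i : ℕ) := by
  rw [glue_left α β _ i.isLt]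
  congr 1

lemma glue_emM : (glue α β emM : ℕ) = a + b := glue_mid α β _ rfl

lemma glue_emR (j : Fin b) : (glue α β (emR j) : ℕ) = (β j : ℕ) := by
  rw [glue_right α β _ (by simp [emR]; omega)]
  congr 1
  apply Fin.ext
  simp [emR]

lemma avoids_glue_iff : Avoids132 (glue α β) ↔ Avoids132 α ∧ Avoids132 β := by
  constructor
  · intro h
    constructor
    · rintro ⟨x, y, z, hxy, hyz, h1, h2⟩
      apply h
      refine ⟨emL x, emL y, emL z, ?_, ?_, ?_, ?_⟩ <;>
        simp only [Fin.lt_def, emL_val, glue_emL]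
      · exact hxy
      · exact hyz
      · have := Fin.lt_def.mp h1; omega
      · have := Fin.lt_def.mp h2; omega
    · rintro ⟨x, y, z, hxy, hyz, h1, h2⟩
      apply h
      refine ⟨emR x, emR y, emR z, ?_, ?_, ?_, ?_⟩ <;>
        simp only [Fin.lt_def, emR_val, glue_emR]
      · have := Fin.lt_def.mp hxy; omega
      · have := Fin.lt_def.mp hyz; omega
      · have := Fin.lt_def.mp h1; omega
      · have := Fin.lt_def.mp h2; omega
  · rintro ⟨hα, hβ⟩ ⟨x, y, z, hxy, hyz, h1, h2⟩
    rw [Fin.lt_def] at hxy hyz h1 h2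
    rcases lt_trichotomy (x : ℕ) a with hx | hx | hx
    · rcases lt_trichotomy (y : ℕ) a with hy | hy | hy
      · rcases lt_trichotomy (z : ℕ) a with hz | hz | hz
        · -- all in α
          apply hα
          refine ⟨⟨x, hx⟩, ⟨y, hy⟩, ⟨z, hz⟩, hxy, hyz, ?_, ?_⟩ <;> rw [Fin.lt_def]
          · have e1 := glue_left α β x hx
            have e3 := glue_left α β z hz
            omega
          · have e2 := glue_left α β y hy
            have e3 := glue_left α β z hz
            omega
        · have e3 := glue_mid α β z hz
          have := glue_lt_ab α β (i := y) (by omega)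
          omega
        · have e3 := glue_lt_b α β hz
          have := glue_ge_b α β hx
          omega
      · rcases lt_trichotomy (z : ℕ) a with hz | hz | hz
        · omega
        · omega
        · have e3 := glue_lt_b α β hz
          have := glue_ge_b α β hx
          omega
      · have hz : a < (z : ℕ) := by omega
        have e3 := glue_lt_b α β hz
        have := glue_ge_b α β hx
        omega
    · have e1 := glue_mid α β x hx
      have := glue_lt_ab α β (i := z) (by omega)
      omega
    · -- all in β
      have hy : a < (y : ℕ) := by omega
      have hz : a < (z : ℕ) := by omega
      apply hβ
      refine ⟨⟨(x:ℕ) - (a+1), by have := x.isLt; omega⟩,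
              ⟨(y:ℕ) - (a+1), by have := y.isLt; omega⟩,
              ⟨(z:ℕ) - (a+1), by have := z.isLt; omega⟩, ?_, ?_, ?_, ?_⟩ <;> rw [Fin.lt_def]
      · simp; omega
      · simp; omega
      · have e1 := glue_right α β x hx
        have e3 := glue_right α β z hz
        omega
      · have e2 := glue_right α β y hy
        have e3 := glue_right α β z hz
        omega

lemma exists_glue (σ : Perm (Fin (a+1+b))) (hσ : Avoids132 σ)
    (hmax : (σ emM : ℕ) = a + b) :
    ∃ (α : Perm (Fin a)) (β : Perm (Fin b)), σ = glue α β := by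
  have hne : ∀ i : Fin (a+1+b), (i : ℕ) ≠ a → (σ i : ℕ) < a + b := by
    intro i hi
    have h1 : σ i ≠ σ emM := fun h => hi (by simpa [Fin.ext_iff] using σ.injective h)
    have h2 : (σ i : ℕ) ≤ a + b := by have := (σ i).isLt; omega
    have h3 : (σ i : ℕ) ≠ a + b := by rw [← hmax]; exact fun h => h1 (Fin.ext h)
    omega
  have C1 : ∀ i j : Fin (a+1+b), (i : ℕ) < a → a < (j : ℕ) → (σ j : ℕ) < (σ i : ℕ) := by
    intro i j hi hj
    by_contra hc
    have hij : (σ i : ℕ) ≠ (σ j : ℕ) := fun h => by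
      have := σ.injective (Fin.ext h); rw [Fin.ext_iff] at this; omega
    have hlt : (σ i : ℕ) < (σ j : ℕ) := by omega
    apply hσ
    exact ⟨i, emM, j, by rw [Fin.lt_def]; simpa using hi, by rw [Fin.lt_def]; simpa using hj,
      by rw [Fin.lt_def]; exact hlt, by rw [Fin.lt_def]; have := hne j (by omega); omega⟩
  have C2 : ∀ i : Fin (a+1+b), (i : ℕ) < a → b ≤ (σ i : ℕ) := by
    intro i hi
    have hsub : (Finset.Ioi (emM : Fin (a+1+b))).image σ ⊆ Finset.Iio (σ i) := by
      intro v hv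
      simp only [Finset.mem_image, Finset.mem_Ioi] at hv
      obtain ⟨j, hj, rfl⟩ := hv
      rw [Finset.mem_Iio, Fin.lt_def]
      exact C1 i j hi (by rw [Fin.lt_def] at hj; simpa using hj)
    have hcard := Finset.card_le_card hsub
    rw [Finset.card_image_of_injective _ σ.injective, Fin.card_Ioi, Fin.card_Iio] at hcard
    simp only [emM_val] at hcard
    omega
  have C3 : ∀ j : Fin (a+1+b), a < (j : ℕ) → (σ j : ℕ) < b := by
    intro j hj
    have hsub : (Finset.Iic (emM : Fin (a+1+b))).image σ ⊆ Finset.Ioi (σ j) := by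
      intro v hv
      simp only [Finset.mem_image, Finset.mem_Iic] at hv
      obtain ⟨i, hi, rfl⟩ := hv
      rw [Finset.mem_Ioi, Fin.lt_def]
      rcases eq_or_lt_of_le hi with h | h
      · rw [h]; rw [hmax]; exact hne j (by omega)
      · exact C1 i j (by rw [Fin.lt_def] at h; simpa using h) hj
    have hcard := Finset.card_le_card hsub
    rw [Finset.card_image_of_injective _ σ.injective, Fin.card_Iic, Fin.card_Ioi] at hcard
    simp only [emM_val] at hcard
    have := (σ j).isLt
    omega
  -- build α and β
  have hfα : ∀ i : Fin a, (σ (emL i) : ℕ) - b < a := by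
    intro i
    have := hne (emL i) (by simp only [emL_val]; have := i.isLt; omega)
    have := i.isLt
    omega
  have hfβ : ∀ j : Fin b, (σ (emR j) : ℕ) < b := by
    intro j
    exact C3 (emR j) (by simp only [emR_val]; omega)
  set fα : Fin a → Fin a := fun i => ⟨(σ (emL i) : ℕ) - b, hfα i⟩ with hfαdef
  set fβ : Fin b → Fin b := fun j => ⟨(σ (emR j) : ℕ), hfβ j⟩ with hfβdef
  have injα : Function.Injective fα := by
    intro x y h
    rw [hfαdef, Fin.ext_iff] at h
    have h2x := C2 (emL x) x.isLt
    have h2y := C2 (emL y) y.isLt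
    have : σ (emL x) = σ (emL y) := by rw [Fin.ext_iff]; simp at h; omega
    have := σ.injective this
    rw [Fin.ext_iff] at this
    exact Fin.ext (by simpa using this)
  have injβ : Function.Injective fβ := by
    intro x y h
    rw [hfβdef, Fin.ext_iff] at h
    have : σ (emR x) = σ (emR y) := Fin.ext (by simpa using h)
    have := σ.injective this
    rw [Fin.ext_iff] at this
    simp only [emR_val] at this
    exact Fin.ext (by omega)
  set Aeq : Perm (Fin a) := Equiv.ofBijective fα (Finite.injective_iff_bijective.mp injα)
    with hAdef
  set Beq : Perm (Fin b) := Equiv.ofBijective fβ (Finite.injective_iff_bijective.mp injβ)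
    with hBdef
  refine ⟨Aeq, Beq, ?_⟩
  apply Equiv.ext
  intro i
  apply Fin.ext
  rcases lt_trichotomy (i : ℕ) a with h | h | h
  · rw [glue_left _ _ i h]
    have happ : ((Aeq ⟨(i:ℕ), h⟩ : Fin a) : ℕ) = (σ (emL ⟨(i:ℕ), h⟩) : ℕ) - b := rfl
    rw [happ]
    have hE : emL (⟨(i:ℕ), h⟩ : Fin a) = i := Fin.ext rfl
    rw [hE]
    have := C2 i h
    omega
  · rw [glue_mid _ _ i h]
    have : i = emM := Fin.ext h
    rw [this, hmax]
  · rw [glue_right _ _ i h]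
    have happ : ((Beq ⟨(i:ℕ) - (a+1), by have := i.isLt; omega⟩ : Fin b) : ℕ)
        = (σ (emR ⟨(i:ℕ) - (a+1), by have := i.isLt; omega⟩) : ℕ) := rfl
    rw [happ]
    have hE : emR (⟨(i:ℕ) - (a+1), by have := i.isLt; omega⟩ : Fin b) = i := Fin.ext (by simp; omega)
    rw [hE]

/-! ### statistics -/

def o21 {n : ℕ} (σ : Perm (Fin n)) : ℕ :=
  (Finset.univ.filter fun p : Fin n × Fin n => p.1 < p.2 ∧ σ p.2 < σ p.1).card

def o12 {n : ℕ} (σ : Perm (Fin n)) : ℕ :=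
  (Finset.univ.filter fun p : Fin n × Fin n => p.1 < p.2 ∧ σ p.1 < σ p.2).card

def o213 {n : ℕ} (σ : Perm (Fin n)) : ℕ :=
  (Finset.univ.filter fun t : Fin n × Fin n × Fin n =>
    t.1 < t.2.1 ∧ t.2.1 < t.2.2 ∧ σ t.2.1 < σ t.1 ∧ σ t.1 < σ t.2.2).card

def o231 {n : ℕ} (σ : Perm (Fin n)) : ℕ :=
  (Finset.univ.filter fun t : Fin n × Fin n × Fin n =>
    t.1 < t.2.1 ∧ t.2.1 < t.2.2 ∧ σ t.2.2 < σ t.1 ∧ σ t.1 < σ t.2.1).card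

def o312 {n : ℕ} (σ : Perm (Fin n)) : ℕ :=
  (Finset.univ.filter fun t : Fin n × Fin n × Fin n =>
    t.1 < t.2.1 ∧ t.2.1 < t.2.2 ∧ σ t.2.1 < σ t.2.2 ∧ σ t.2.2 < σ t.1).card

lemma rep3 (i : Fin (a+1+b)) :
    (∃ i' : Fin a, i = emL i') ∨ i = emM ∨ ∃ i' : Fin b, i = emR i' := by
  rcases lt_trichotomy (i : ℕ) a with h | h | h
  · exact Or.inl ⟨⟨(i : ℕ), h⟩, Fin.ext rfl⟩
  · exact Or.inr (Or.inl (Fin.ext h))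
  · exact Or.inr (Or.inr ⟨⟨(i : ℕ) - (a+1), by have := i.isLt; omega⟩, Fin.ext (by simp; omega)⟩)

lemma emL_lt_emL {i j : Fin a} : (emL i : Fin (a+1+b)) < emL j ↔ i < j := by
  rw [Fin.lt_def, Fin.lt_def, emL_val, emL_val]

lemma emR_lt_emR {i j : Fin b} : (emR i : Fin (a+1+b)) < emR j ↔ i < j := by
  rw [Fin.lt_def, Fin.lt_def, emR_val, emR_val]
  omega

lemma not_emM_lt_emL (y : Fin a) : ¬ (emM : Fin (a+1+b)) < emL y := by
  rw [Fin.lt_def, emM_val, emL_val]; have := y.isLt; omega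

lemma not_emR_lt_emL (x : Fin b) (y : Fin a) : ¬ (emR x : Fin (a+1+b)) < emL y := by
  rw [Fin.lt_def, emR_val, emL_val]; have := y.isLt; omega

lemma not_emR_lt_emM (x : Fin b) : ¬ (emR x : Fin (a+1+b)) < emM := by
  rw [Fin.lt_def, emR_val, emM_val]; omega

lemma emL_lt_emM (x : Fin a) : (emL x : Fin (a+1+b)) < emM := by
  rw [Fin.lt_def, emL_val, emM_val]; exact x.isLt

lemma emL_lt_emR (x : Fin a) (y : Fin b) : (emL x : Fin (a+1+b)) < emR y := by
  rw [Fin.lt_def, emL_val, emR_val]; have := x.isLt; omega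

lemma emM_lt_emR (y : Fin b) : (emM : Fin (a+1+b)) < emR y := by
  rw [Fin.lt_def, emM_val, emR_val]; omega

lemma glue_emL_lt_emL {i j : Fin a} : glue α β (emL i) < glue α β (emL j) ↔ α i < α j := by
  rw [Fin.lt_def, Fin.lt_def, glue_emL, glue_emL]; omega

lemma glue_emR_lt_emR {i j : Fin b} : glue α β (emR i) < glue α β (emR j) ↔ β i < β j := by
  rw [Fin.lt_def, Fin.lt_def, glue_emR, glue_emR]

lemma glue_emR_lt_emL (j : Fin b) (i : Fin a) : glue α β (emR j) < glue α β (emL i) := by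
  rw [Fin.lt_def, glue_emR, glue_emL]; have := (β j).isLt; omega

lemma glue_emL_lt_emM (i : Fin a) : glue α β (emL i) < glue α β emM := by
  rw [Fin.lt_def, glue_emL, glue_emM]; have := (α i).isLt; omega

lemma glue_emR_lt_emM (j : Fin b) : glue α β (emR j) < glue α β emM := by
  rw [Fin.lt_def, glue_emR, glue_emM]; have := (β j).isLt; omega

lemma emL_injective : Function.Injective (emL : Fin a → Fin (a+1+b)) := by
  intro x y h
  have := congrArg Fin.val h
  rw [emL_val, emL_val] at this
  exact Fin.ext this

lemma emR_injective : Function.Injective (emR : Fin b → Fin (a+1+b)) := by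
  intro x y h
  have := congrArg Fin.val h
  rw [emR_val, emR_val] at this
  exact Fin.ext (by omega)

lemma o21_glue : o21 (glue α β) = o21 α + o21 β + (a * b + b) := by
  classical
  rw [o21]
  set n := a + 1 + b
  set S := (Finset.univ.filter fun p : Fin n × Fin n =>
    p.1 < p.2 ∧ glue α β p.2 < glue α β p.1) with hS
  set s1 := ((Finset.univ.filter fun p : Fin a × Fin a => p.1 < p.2 ∧ α p.2 < α p.1).image
    fun p => ((emL p.1 : Fin n), (emL p.2 : Fin n))) with hs1
  set s2 := ((Finset.univ.filter fun p : Fin b × Fin b => p.1 < p.2 ∧ β p.2 < β p.1).image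
    fun p => ((emR p.1 : Fin n), (emR p.2 : Fin n))) with hs2
  set s3 := ((Finset.univ : Finset (Fin a × Fin b)).image
    fun p => ((emL p.1 : Fin n), (emR p.2 : Fin n))) with hs3
  set s4 := ((Finset.univ : Finset (Fin b)).image
    fun j => ((emM : Fin n), (emR j : Fin n))) with hs4
  have hSeq : S = (s1 ∪ s2) ∪ (s3 ∪ s4) := by
    ext p
    obtain ⟨x, y⟩ := p
    simp only [hS, hs1, hs2, hs3, hs4, Finset.mem_filter, Finset.mem_univ, true_and,
      Finset.mem_union, Finset.mem_image, Prod.mk.injEq, Prod.exists]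
    constructor
    · rintro ⟨hxy, hv⟩
      rcases rep3 x with ⟨x', rfl⟩ | rfl | ⟨x', rfl⟩
      · rcases rep3 y with ⟨y', rfl⟩ | rfl | ⟨y', rfl⟩
        · exact Or.inl (Or.inl ⟨x', y', ⟨emL_lt_emL.mp hxy, (glue_emL_lt_emL α β).mp hv⟩, rfl, rfl⟩)
        · exact absurd hv (by have := glue_emL_lt_emM α β x'; omega)
        · exact Or.inr (Or.inl ⟨x', y', rfl, rfl⟩)
      · rcases rep3 y with ⟨y', rfl⟩ | rfl | ⟨y', rfl⟩
        · exact absurd hxy (not_emM_lt_emL y')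
        · exact absurd hxy (lt_irrefl _)
        · exact Or.inr (Or.inr ⟨y', rfl, rfl⟩)
      · rcases rep3 y with ⟨y', rfl⟩ | rfl | ⟨y', rfl⟩
        · exact absurd hxy (not_emR_lt_emL x' y')
        · exact absurd hv (by have := glue_emR_lt_emM α β x'; omega)
        · exact Or.inl (Or.inr ⟨x', y', ⟨emR_lt_emR.mp hxy, (glue_emR_lt_emR α β).mp hv⟩, rfl, rfl⟩)
    · rintro ((⟨x', y', ⟨h1, h2⟩, rfl, rfl⟩ | ⟨x', y', ⟨h1, h2⟩, rfl, rfl⟩) |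
        (⟨x', y', rfl, rfl⟩ | ⟨y', rfl, rfl⟩))
      · exact ⟨emL_lt_emL.mpr h1, (glue_emL_lt_emL α β).mpr h2⟩
      · exact ⟨emR_lt_emR.mpr h1, (glue_emR_lt_emR α β).mpr h2⟩
      · exact ⟨emL_lt_emR x' y', glue_emR_lt_emL α β _ _⟩
      · exact ⟨emM_lt_emR y', glue_emR_lt_emM α β _⟩
  have hemLinj : Function.Injective (emL : Fin a → Fin (a+1+b)) := emL_injective
  have hemRinj : Function.Injective (emR : Fin b → Fin (a+1+b)) := emR_injective
  have inj2L : Function.Injective fun p : Fin a × Fin a => ((emL p.1 : Fin n), (emL p.2 : Fin n)) := by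
    rintro ⟨x, y⟩ ⟨x', y'⟩ h
    have h1 := congrArg Prod.fst h
    have h2 := congrArg Prod.snd h
    exact Prod.ext (hemLinj h1) (hemLinj h2)
  have inj2R : Function.Injective fun p : Fin b × Fin b => ((emR p.1 : Fin n), (emR p.2 : Fin n)) := by
    rintro ⟨x, y⟩ ⟨x', y'⟩ h
    have h1 := congrArg Prod.fst h
    have h2 := congrArg Prod.snd h
    exact Prod.ext (hemRinj h1) (hemRinj h2)
  have inj3 : Function.Injective fun p : Fin a × Fin b => ((emL p.1 : Fin n), (emR p.2 : Fin n)) := by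
    rintro ⟨x, y⟩ ⟨x', y'⟩ h
    have h1 := congrArg Prod.fst h
    have h2 := congrArg Prod.snd h
    exact Prod.ext (hemLinj h1) (hemRinj h2)
  have inj4 : Function.Injective fun j : Fin b => ((emM : Fin n), (emR j : Fin n)) := by
    intro x y h
    exact hemRinj (congrArg Prod.snd h)
  have d12 : Disjoint s1 s2 := by
    rw [Finset.disjoint_left]
    rintro ⟨x, y⟩ h1 h2
    simp only [hs1, hs2, Finset.mem_image, Finset.mem_filter, Finset.mem_univ, true_and,
      Prod.mk.injEq, Prod.exists] at h1 h2
    obtain ⟨x1, _, _, hx, _⟩ := h1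
    obtain ⟨x2, _, _, hx', _⟩ := h2
    rw [← hx] at hx'
    have := congrArg Fin.val hx'
    rw [emR_val, emL_val] at this
    have := x1.isLt
    omega
  have d34 : Disjoint s3 s4 := by
    rw [Finset.disjoint_left]
    rintro ⟨x, y⟩ h1 h2
    simp only [hs3, hs4, Finset.mem_image, Finset.mem_filter, Finset.mem_univ, true_and,
      Prod.mk.injEq, Prod.exists] at h1 h2
    obtain ⟨x1, _, hx, _⟩ := h1
    obtain ⟨_, hx', _⟩ := h2
    rw [← hx] at hx'
    have := congrArg Fin.val hx'
    rw [emM_val, emL_val] at this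
    have := x1.isLt
    omega
  have d1234 : Disjoint (s1 ∪ s2) (s3 ∪ s4) := by
    rw [Finset.disjoint_left]
    rintro ⟨x, y⟩ h1 h2
    rw [Finset.mem_union] at h1 h2
    have hy1 : (y : ℕ) < a ∨ a < (x : ℕ) := by
      rcases h1 with h | h <;>
        simp only [hs1, hs2, Finset.mem_image, Prod.mk.injEq, Prod.exists] at h
      · obtain ⟨_, y', _, _, hy⟩ := h
        rw [← hy]
        exact Or.inl (Fin.isLt y')
      · obtain ⟨x', _, _, hx, _⟩ := h
        rw [← hx]
        refine Or.inr ?_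
        rw [emR_val]
        omega
    have hy2 : a < (y : ℕ) ∧ (x : ℕ) ≤ a := by
      rcases h2 with h | h <;>
        simp only [hs3, hs4, Finset.mem_image, Prod.mk.injEq, Prod.exists] at h
      · obtain ⟨x', y', _, hx, hy⟩ := h
        rw [← hx, ← hy]
        constructor
        · rw [emR_val]; omega
        · rw [emL_val]
          exact le_of_lt (Fin.isLt x')
      · obtain ⟨y', _, hx, hy⟩ := h
        rw [← hx, ← hy]
        constructor
        · rw [emR_val]; omega
        · rw [emM_val]
    omega
  rw [hSeq, Finset.card_union_of_disjoint d1234, Finset.card_union_of_disjoint d12,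
    Finset.card_union_of_disjoint d34, Finset.card_image_of_injective _ inj2L,
    Finset.card_image_of_injective _ inj2R, Finset.card_image_of_injective _ inj3,
    Finset.card_image_of_injective _ inj4]
  simp [o21, Finset.card_univ]
  try ring

lemma o12_glue : o12 (glue α β) = o12 α + o12 β + a := by
  classical
  rw [o12]
  set n := a + 1 + b
  set S := (Finset.univ.filter fun p : Fin n × Fin n =>
    p.1 < p.2 ∧ glue α β p.1 < glue α β p.2) with hS
  set s1 := ((Finset.univ.filter fun p : Fin a × Fin a => p.1 < p.2 ∧ α p.1 < α p.2).image
    fun p => ((emL p.1 : Fin n), (emL p.2 : Fin n))) with hs1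
  set s2 := ((Finset.univ.filter fun p : Fin b × Fin b => p.1 < p.2 ∧ β p.1 < β p.2).image
    fun p => ((emR p.1 : Fin n), (emR p.2 : Fin n))) with hs2
  set s3 := ((Finset.univ : Finset (Fin a)).image
    fun i => ((emL i : Fin n), (emM : Fin n))) with hs3
  have hSeq : S = (s1 ∪ s2) ∪ s3 := by
    ext p
    obtain ⟨x, y⟩ := p
    simp only [hS, hs1, hs2, hs3, Finset.mem_filter, Finset.mem_univ, true_and,
      Finset.mem_union, Finset.mem_image, Prod.mk.injEq, Prod.exists]
    constructor
    · rintro ⟨hxy, hv⟩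
      rcases rep3 x with ⟨x', rfl⟩ | rfl | ⟨x', rfl⟩
      · rcases rep3 y with ⟨y', rfl⟩ | rfl | ⟨y', rfl⟩
        · exact Or.inl (Or.inl ⟨x', y', ⟨emL_lt_emL.mp hxy, (glue_emL_lt_emL α β).mp hv⟩, rfl, rfl⟩)
        · exact Or.inr ⟨x', rfl, rfl⟩
        · exact absurd hv (by have := glue_emR_lt_emL α β y' x'; omega)
      · rcases rep3 y with ⟨y', rfl⟩ | rfl | ⟨y', rfl⟩
        · exact absurd hxy (not_emM_lt_emL y')
        · exact absurd hxy (lt_irrefl _)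
        · exact absurd hv (by have := glue_emR_lt_emM α β y'; omega)
      · rcases rep3 y with ⟨y', rfl⟩ | rfl | ⟨y', rfl⟩
        · exact absurd hxy (not_emR_lt_emL x' y')
        · exact absurd hxy (not_emR_lt_emM x')
        · exact Or.inl (Or.inr ⟨x', y', ⟨emR_lt_emR.mp hxy, (glue_emR_lt_emR α β).mp hv⟩, rfl, rfl⟩)
    · rintro ((⟨x', y', ⟨h1, h2⟩, rfl, rfl⟩ | ⟨x', y', ⟨h1, h2⟩, rfl, rfl⟩) | ⟨x', rfl, rfl⟩)
      · exact ⟨emL_lt_emL.mpr h1, (glue_emL_lt_emL α β).mpr h2⟩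
      · exact ⟨emR_lt_emR.mpr h1, (glue_emR_lt_emR α β).mpr h2⟩
      · exact ⟨emL_lt_emM x', glue_emL_lt_emM α β x'⟩
  have inj2L : Function.Injective fun p : Fin a × Fin a => ((emL p.1 : Fin n), (emL p.2 : Fin n)) := by
    rintro ⟨x, y⟩ ⟨x', y'⟩ h
    exact Prod.ext (emL_injective (congrArg Prod.fst h)) (emL_injective (congrArg Prod.snd h))
  have inj2R : Function.Injective fun p : Fin b × Fin b => ((emR p.1 : Fin n), (emR p.2 : Fin n)) := by
    rintro ⟨x, y⟩ ⟨x', y'⟩ h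
    exact Prod.ext (emR_injective (congrArg Prod.fst h)) (emR_injective (congrArg Prod.snd h))
  have inj3 : Function.Injective fun i : Fin a => ((emL i : Fin n), (emM : Fin n)) :=
    fun x y h => emL_injective (congrArg Prod.fst h)
  have d12 : Disjoint s1 s2 := by
    rw [Finset.disjoint_left]
    rintro ⟨x, y⟩ h1 h2
    simp only [hs1, hs2, Finset.mem_image, Finset.mem_filter, Finset.mem_univ, true_and,
      Prod.mk.injEq, Prod.exists] at h1 h2
    obtain ⟨x1, _, _, hx, _⟩ := h1
    obtain ⟨x2, _, _, hx', _⟩ := h2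
    rw [← hx] at hx'
    have := congrArg Fin.val hx'
    rw [emR_val, emL_val] at this
    have := x1.isLt
    omega
  have d123 : Disjoint (s1 ∪ s2) s3 := by
    rw [Finset.disjoint_left]
    rintro ⟨x, y⟩ h1 h2
    simp only [hs3, Finset.mem_image, Finset.mem_univ, true_and, Prod.mk.injEq] at h2
    obtain ⟨_, _, hy⟩ := h2
    rw [Finset.mem_union] at h1
    rcases h1 with h | h <;>
      simp only [hs1, hs2, Finset.mem_image, Finset.mem_filter, Finset.mem_univ, true_and,
        Prod.mk.injEq, Prod.exists] at h
    · obtain ⟨_, y1, _, _, hy'⟩ := h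
      rw [← hy] at hy'
      have := congrArg Fin.val hy'
      rw [emL_val, emM_val] at this
      have := y1.isLt
      omega
    · obtain ⟨_, y1, _, _, hy'⟩ := h
      rw [← hy] at hy'
      have := congrArg Fin.val hy'
      rw [emR_val, emM_val] at this
      omega
  rw [hSeq, Finset.card_union_of_disjoint d123, Finset.card_union_of_disjoint d12,
    Finset.card_image_of_injective _ inj2L, Finset.card_image_of_injective _ inj2R,
    Finset.card_image_of_injective _ inj3]
  simp [o12, Finset.card_univ]

lemma o213_glue : o213 (glue α β) = o213 α + o213 β + o21 α := by
  classical
  rw [o213]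
  set n := a + 1 + b
  set S := (Finset.univ.filter fun t : Fin n × Fin n × Fin n =>
    t.1 < t.2.1 ∧ t.2.1 < t.2.2 ∧ glue α β t.2.1 < glue α β t.1 ∧
      glue α β t.1 < glue α β t.2.2) with hS
  set s1 := ((Finset.univ.filter fun t : Fin a × Fin a × Fin a =>
      t.1 < t.2.1 ∧ t.2.1 < t.2.2 ∧ α t.2.1 < α t.1 ∧ α t.1 < α t.2.2).image
    fun t => ((emL t.1 : Fin n), (emL t.2.1 : Fin n), (emL t.2.2 : Fin n))) with hs1
  set s2 := ((Finset.univ.filter fun t : Fin b × Fin b × Fin b =>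
      t.1 < t.2.1 ∧ t.2.1 < t.2.2 ∧ β t.2.1 < β t.1 ∧ β t.1 < β t.2.2).image
    fun t => ((emR t.1 : Fin n), (emR t.2.1 : Fin n), (emR t.2.2 : Fin n))) with hs2
  set s3 := ((Finset.univ.filter fun p : Fin a × Fin a => p.1 < p.2 ∧ α p.2 < α p.1).image
    fun p => ((emL p.1 : Fin n), (emL p.2 : Fin n), (emM : Fin n))) with hs3
  have hSeq : S = (s1 ∪ s2) ∪ s3 := by
    ext t
    obtain ⟨x, y, z⟩ := t
    simp only [hS, hs1, hs2, hs3, Finset.mem_filter, Finset.mem_univ, true_and,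
      Finset.mem_union, Finset.mem_image, Prod.mk.injEq, Prod.exists]
    constructor
    · rintro ⟨hxy, hyz, hv1, hv2⟩
      rcases rep3 x with ⟨x', rfl⟩ | rfl | ⟨x', rfl⟩
      · rcases rep3 y with ⟨y', rfl⟩ | rfl | ⟨y', rfl⟩
        · rcases rep3 z with ⟨z', rfl⟩ | rfl | ⟨z', rfl⟩
          · exact Or.inl (Or.inl ⟨x', y', z', ⟨emL_lt_emL.mp hxy, emL_lt_emL.mp hyz,
              (glue_emL_lt_emL α β).mp hv1, (glue_emL_lt_emL α β).mp hv2⟩, rfl, rfl, rfl⟩)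
          · exact Or.inr ⟨x', y', ⟨emL_lt_emL.mp hxy, (glue_emL_lt_emL α β).mp hv1⟩,
              rfl, rfl, rfl⟩
          · exact absurd hv2 (by have := glue_emR_lt_emL α β z' x'; omega)
        · exact absurd hv1 (by have := glue_emL_lt_emM α β x'; omega)
        · rcases rep3 z with ⟨z', rfl⟩ | rfl | ⟨z', rfl⟩
          · exact absurd hyz (not_emR_lt_emL y' z')
          · exact absurd hyz (not_emR_lt_emM y')
          · exact absurd hv2 (by have := glue_emR_lt_emL α β z' x'; omega)
      · rcases rep3 z with ⟨z', rfl⟩ | rfl | ⟨z', rfl⟩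
        · exact absurd hv2 (by have := glue_emL_lt_emM α β z'; omega)
        · exact absurd hv2 (lt_irrefl _)
        · exact absurd hv2 (by have := glue_emR_lt_emM α β z'; omega)
      · rcases rep3 y with ⟨y', rfl⟩ | rfl | ⟨y', rfl⟩
        · exact absurd hxy (not_emR_lt_emL x' y')
        · exact absurd hxy (not_emR_lt_emM x')
        · rcases rep3 z with ⟨z', rfl⟩ | rfl | ⟨z', rfl⟩
          · exact absurd hyz (not_emR_lt_emL y' z')
          · exact absurd hyz (not_emR_lt_emM y')
          · exact Or.inl (Or.inr ⟨x', y', z', ⟨emR_lt_emR.mp hxy, emR_lt_emR.mp hyz,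
              (glue_emR_lt_emR α β).mp hv1, (glue_emR_lt_emR α β).mp hv2⟩, rfl, rfl, rfl⟩)
    · rintro ((⟨x', y', z', ⟨h1, h2, h3, h4⟩, rfl, rfl, rfl⟩ |
        ⟨x', y', z', ⟨h1, h2, h3, h4⟩, rfl, rfl, rfl⟩) | ⟨x', y', ⟨h1, h2⟩, rfl, rfl, rfl⟩)
      · exact ⟨emL_lt_emL.mpr h1, emL_lt_emL.mpr h2, (glue_emL_lt_emL α β).mpr h3,
          (glue_emL_lt_emL α β).mpr h4⟩
      · exact ⟨emR_lt_emR.mpr h1, emR_lt_emR.mpr h2, (glue_emR_lt_emR α β).mpr h3,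
          (glue_emR_lt_emR α β).mpr h4⟩
      · exact ⟨emL_lt_emL.mpr h1, emL_lt_emM y', (glue_emL_lt_emL α β).mpr h2,
          glue_emL_lt_emM α β x'⟩
  have inj1 : Function.Injective fun t : Fin a × Fin a × Fin a =>
      ((emL t.1 : Fin n), (emL t.2.1 : Fin n), (emL t.2.2 : Fin n)) := by
    rintro ⟨x, y, z⟩ ⟨x', y', z'⟩ h
    have h1 := congrArg Prod.fst h
    have h2 := congrArg (fun t : Fin n × Fin n × Fin n => t.2.1) h
    have h3 := congrArg (fun t : Fin n × Fin n × Fin n => t.2.2) h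
    exact Prod.ext (emL_injective h1) (Prod.ext (emL_injective h2) (emL_injective h3))
  have inj2 : Function.Injective fun t : Fin b × Fin b × Fin b =>
      ((emR t.1 : Fin n), (emR t.2.1 : Fin n), (emR t.2.2 : Fin n)) := by
    rintro ⟨x, y, z⟩ ⟨x', y', z'⟩ h
    have h1 := congrArg Prod.fst h
    have h2 := congrArg (fun t : Fin n × Fin n × Fin n => t.2.1) h
    have h3 := congrArg (fun t : Fin n × Fin n × Fin n => t.2.2) h
    exact Prod.ext (emR_injective h1) (Prod.ext (emR_injective h2) (emR_injective h3))
  have inj3 : Function.Injective fun p : Fin a × Fin a =>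
      ((emL p.1 : Fin n), (emL p.2 : Fin n), (emM : Fin n)) := by
    rintro ⟨x, y⟩ ⟨x', y'⟩ h
    have h1 := congrArg Prod.fst h
    have h2 := congrArg (fun t : Fin n × Fin n × Fin n => t.2.1) h
    exact Prod.ext (emL_injective h1) (emL_injective h2)
  have d12 : Disjoint s1 s2 := by
    rw [Finset.disjoint_left]
    rintro ⟨x, y, z⟩ h1 h2
    simp only [hs1, hs2, Finset.mem_image, Finset.mem_filter, Finset.mem_univ, true_and,
      Prod.mk.injEq, Prod.exists] at h1 h2
    obtain ⟨x1, _, _, _, hx, _⟩ := h1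
    obtain ⟨x2, _, _, _, hx', _⟩ := h2
    rw [← hx] at hx'
    have := congrArg Fin.val hx'
    rw [emR_val, emL_val] at this
    have := x1.isLt
    omega
  have d123 : Disjoint (s1 ∪ s2) s3 := by
    rw [Finset.disjoint_left]
    rintro ⟨x, y, z⟩ h1 h2
    simp only [hs3, Finset.mem_image, Finset.mem_filter, Finset.mem_univ, true_and,
      Prod.mk.injEq, Prod.exists] at h2
    obtain ⟨_, _, _, _, _, hz⟩ := h2
    rw [Finset.mem_union] at h1
    rcases h1 with h | h <;>
      simp only [hs1, hs2, Finset.mem_image, Finset.mem_filter, Finset.mem_univ, true_and,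
        Prod.mk.injEq, Prod.exists] at h
    · obtain ⟨_, _, z1, _, _, _, hz'⟩ := h
      rw [← hz] at hz'
      have := congrArg Fin.val hz'
      rw [emL_val, emM_val] at this
      have := z1.isLt
      omega
    · obtain ⟨_, _, z1, _, _, _, hz'⟩ := h
      rw [← hz] at hz'
      have := congrArg Fin.val hz'
      rw [emR_val, emM_val] at this
      omega
  rw [hSeq, Finset.card_union_of_disjoint d123, Finset.card_union_of_disjoint d12,
    Finset.card_image_of_injective _ inj1, Finset.card_image_of_injective _ inj2,
    Finset.card_image_of_injective _ inj3]
  simp [o213, o21]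

lemma o231_glue : o231 (glue α β) = o231 α + o231 β + (o12 α * b + a * b) := by
  classical
  rw [o231]
  set n := a + 1 + b
  set S := (Finset.univ.filter fun t : Fin n × Fin n × Fin n =>
    t.1 < t.2.1 ∧ t.2.1 < t.2.2 ∧ glue α β t.2.2 < glue α β t.1 ∧
      glue α β t.1 < glue α β t.2.1) with hS
  set s1 := ((Finset.univ.filter fun t : Fin a × Fin a × Fin a =>
      t.1 < t.2.1 ∧ t.2.1 < t.2.2 ∧ α t.2.2 < α t.1 ∧ α t.1 < α t.2.1).image
    fun t => ((emL t.1 : Fin n), (emL t.2.1 : Fin n), (emL t.2.2 : Fin n))) with hs1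
  set s2 := ((Finset.univ.filter fun t : Fin b × Fin b × Fin b =>
      t.1 < t.2.1 ∧ t.2.1 < t.2.2 ∧ β t.2.2 < β t.1 ∧ β t.1 < β t.2.1).image
    fun t => ((emR t.1 : Fin n), (emR t.2.1 : Fin n), (emR t.2.2 : Fin n))) with hs2
  set s3 := (((Finset.univ.filter fun p : Fin a × Fin a => p.1 < p.2 ∧ α p.1 < α p.2) ×ˢ
      (Finset.univ : Finset (Fin b))).image
    fun q => ((emL q.1.1 : Fin n), (emL q.1.2 : Fin n), (emR q.2 : Fin n))) with hs3
  set s4 := ((Finset.univ : Finset (Fin a × Fin b)).image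
    fun p => ((emL p.1 : Fin n), (emM : Fin n), (emR p.2 : Fin n))) with hs4
  have hSeq : S = (s1 ∪ s2) ∪ (s3 ∪ s4) := by
    ext t
    obtain ⟨x, y, z⟩ := t
    simp only [hS, hs1, hs2, hs3, hs4, Finset.mem_filter, Finset.mem_univ, true_and, and_true,
      Finset.mem_union, Finset.mem_image, Finset.mem_product, Prod.mk.injEq, Prod.exists]
    constructor
    · rintro ⟨hxy, hyz, hv1, hv2⟩
      rcases rep3 x with ⟨x', rfl⟩ | rfl | ⟨x', rfl⟩
      · rcases rep3 y with ⟨y', rfl⟩ | rfl | ⟨y', rfl⟩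
        · rcases rep3 z with ⟨z', rfl⟩ | rfl | ⟨z', rfl⟩
          · exact Or.inl (Or.inl ⟨x', y', z', ⟨emL_lt_emL.mp hxy, emL_lt_emL.mp hyz,
              (glue_emL_lt_emL α β).mp hv1, (glue_emL_lt_emL α β).mp hv2⟩, rfl, rfl, rfl⟩)
          · exact absurd hv1 (by have := glue_emL_lt_emM α β x'; omega)
          · exact Or.inr (Or.inl ⟨x', y', z',
              ⟨emL_lt_emL.mp hxy, (glue_emL_lt_emL α β).mp hv2⟩, rfl, rfl, rfl⟩)
        · rcases rep3 z with ⟨z', rfl⟩ | rfl | ⟨z', rfl⟩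
          · exact absurd hyz (not_emM_lt_emL z')
          · exact absurd hyz (lt_irrefl _)
          · exact Or.inr (Or.inr ⟨x', z', rfl, rfl, rfl⟩)
        · exact absurd hv2 (by have := glue_emR_lt_emL α β y' x'; omega)
      · rcases rep3 y with ⟨y', rfl⟩ | rfl | ⟨y', rfl⟩
        · exact absurd hv2 (by have := glue_emL_lt_emM α β y'; omega)
        · exact absurd hv2 (lt_irrefl _)
        · exact absurd hv2 (by have := glue_emR_lt_emM α β y'; omega)
      · rcases rep3 y with ⟨y', rfl⟩ | rfl | ⟨y', rfl⟩
        · exact absurd hxy (not_emR_lt_emL x' y')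
        · exact absurd hxy (not_emR_lt_emM x')
        · rcases rep3 z with ⟨z', rfl⟩ | rfl | ⟨z', rfl⟩
          · exact absurd hyz (not_emR_lt_emL y' z')
          · exact absurd hyz (not_emR_lt_emM y')
          · exact Or.inl (Or.inr ⟨x', y', z', ⟨emR_lt_emR.mp hxy, emR_lt_emR.mp hyz,
              (glue_emR_lt_emR α β).mp hv1, (glue_emR_lt_emR α β).mp hv2⟩, rfl, rfl, rfl⟩)
    · rintro ((⟨x', y', z', ⟨h1, h2, h3, h4⟩, rfl, rfl, rfl⟩ |
        ⟨x', y', z', ⟨h1, h2, h3, h4⟩, rfl, rfl, rfl⟩) |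
        (⟨x', y', z', ⟨h1, h2⟩, rfl, rfl, rfl⟩ | ⟨x', z', rfl, rfl, rfl⟩))
      · exact ⟨emL_lt_emL.mpr h1, emL_lt_emL.mpr h2, (glue_emL_lt_emL α β).mpr h3,
          (glue_emL_lt_emL α β).mpr h4⟩
      · exact ⟨emR_lt_emR.mpr h1, emR_lt_emR.mpr h2, (glue_emR_lt_emR α β).mpr h3,
          (glue_emR_lt_emR α β).mpr h4⟩
      · exact ⟨emL_lt_emL.mpr h1, emL_lt_emR y' z', glue_emR_lt_emL α β z' x',
          (glue_emL_lt_emL α β).mpr h2⟩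
      · exact ⟨emL_lt_emM x', emM_lt_emR z', glue_emR_lt_emL α β z' x', glue_emL_lt_emM α β x'⟩
  have inj1 : Function.Injective fun t : Fin a × Fin a × Fin a =>
      ((emL t.1 : Fin n), (emL t.2.1 : Fin n), (emL t.2.2 : Fin n)) := by
    rintro ⟨x, y, z⟩ ⟨x', y', z'⟩ h
    have h1 := congrArg Prod.fst h
    have h2 := congrArg (fun t : Fin n × Fin n × Fin n => t.2.1) h
    have h3 := congrArg (fun t : Fin n × Fin n × Fin n => t.2.2) h
    exact Prod.ext (emL_injective h1) (Prod.ext (emL_injective h2) (emL_injective h3))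
  have inj2 : Function.Injective fun t : Fin b × Fin b × Fin b =>
      ((emR t.1 : Fin n), (emR t.2.1 : Fin n), (emR t.2.2 : Fin n)) := by
    rintro ⟨x, y, z⟩ ⟨x', y', z'⟩ h
    have h1 := congrArg Prod.fst h
    have h2 := congrArg (fun t : Fin n × Fin n × Fin n => t.2.1) h
    have h3 := congrArg (fun t : Fin n × Fin n × Fin n => t.2.2) h
    exact Prod.ext (emR_injective h1) (Prod.ext (emR_injective h2) (emR_injective h3))
  have inj3 : Function.Injective fun q : (Fin a × Fin a) × Fin b =>
      ((emL q.1.1 : Fin n), (emL q.1.2 : Fin n), (emR q.2 : Fin n)) := by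
    rintro ⟨⟨x, y⟩, z⟩ ⟨⟨x', y'⟩, z'⟩ h
    have h1 := congrArg Prod.fst h
    have h2 := congrArg (fun t : Fin n × Fin n × Fin n => t.2.1) h
    have h3 := congrArg (fun t : Fin n × Fin n × Fin n => t.2.2) h
    exact Prod.ext (Prod.ext (emL_injective h1) (emL_injective h2)) (emR_injective h3)
  have inj4 : Function.Injective fun p : Fin a × Fin b =>
      ((emL p.1 : Fin n), (emM : Fin n), (emR p.2 : Fin n)) := by
    rintro ⟨x, y⟩ ⟨x', y'⟩ h
    have h1 := congrArg Prod.fst h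
    have h3 := congrArg (fun t : Fin n × Fin n × Fin n => t.2.2) h
    exact Prod.ext (emL_injective h1) (emR_injective h3)
  have d12 : Disjoint s1 s2 := by
    rw [Finset.disjoint_left]
    rintro ⟨x, y, z⟩ h1 h2
    simp only [hs1, hs2, Finset.mem_image, Finset.mem_filter, Finset.mem_univ, true_and,
      Prod.mk.injEq, Prod.exists] at h1 h2
    obtain ⟨x1, _, _, _, hx, _⟩ := h1
    obtain ⟨x2, _, _, _, hx', _⟩ := h2
    rw [← hx] at hx'
    have := congrArg Fin.val hx'
    rw [emR_val, emL_val] at this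
    have := x1.isLt
    omega
  have d34 : Disjoint s3 s4 := by
    rw [Finset.disjoint_left]
    rintro ⟨x, y, z⟩ h1 h2
    simp only [hs3, hs4, Finset.mem_image, Finset.mem_filter, Finset.mem_univ, true_and, and_true,
      Finset.mem_product, Prod.mk.injEq, Prod.exists] at h1 h2
    obtain ⟨_, y1, _, _, _, hy, _⟩ := h1
    obtain ⟨_, _, _, hy', _⟩ := h2
    rw [← hy] at hy'
    have := congrArg Fin.val hy'
    rw [emM_val, emL_val] at this
    have := y1.isLt
    omega
  have d1234 : Disjoint (s1 ∪ s2) (s3 ∪ s4) := by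
    rw [Finset.disjoint_left]
    rintro ⟨x, y, z⟩ h1 h2
    rw [Finset.mem_union] at h1 h2
    have hz2 : a < (z : ℕ) := by
      rcases h2 with h | h <;>
        simp only [hs3, hs4, Finset.mem_image, Finset.mem_filter, Finset.mem_univ, true_and,
          and_true, Finset.mem_product, Prod.mk.injEq, Prod.exists] at h
      · obtain ⟨_, _, z1, _, _, _, hz⟩ := h
        rw [← hz, emR_val]
        omega
      · obtain ⟨_, z1, _, _, hz⟩ := h
        rw [← hz, emR_val]
        omega
    have hz1 : ¬ a < (z : ℕ) := by
      rcases h1 with h | h <;>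
        simp only [hs1, hs2, Finset.mem_image, Finset.mem_filter, Finset.mem_univ, true_and,
          Prod.mk.injEq, Prod.exists] at h
      · obtain ⟨_, _, z1, _, _, _, hz⟩ := h
        rw [← hz, emL_val]
        have := z1.isLt
        omega
      · obtain ⟨x1, _, _, _, hx, _⟩ := h
        -- x is emR, but x < y < z and membership in s3 ∪ s4 forces x ≤ a: contradiction route
        exfalso
        rcases h2 with h' | h' <;>
          simp only [hs3, hs4, Finset.mem_image, Finset.mem_filter, Finset.mem_univ, true_and,
            and_true, Finset.mem_product, Prod.mk.injEq, Prod.exists] at h'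
        · obtain ⟨x2, _, _, _, hx', _⟩ := h'
          rw [← hx] at hx'
          have := congrArg Fin.val hx'
          rw [emL_val, emR_val] at this
          have := x2.isLt
          omega
        · obtain ⟨x2, _, hx', _⟩ := h'
          rw [← hx] at hx'
          have := congrArg Fin.val hx'
          rw [emL_val, emR_val] at this
          have := x2.isLt
          omega
    exact hz1 hz2
  rw [hSeq, Finset.card_union_of_disjoint d1234, Finset.card_union_of_disjoint d12,
    Finset.card_union_of_disjoint d34, Finset.card_image_of_injective _ inj1,
    Finset.card_image_of_injective _ inj2, Finset.card_image_of_injective _ inj3,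
    Finset.card_image_of_injective _ inj4, Finset.card_product]
  simp [o231, o12, Finset.card_univ]

lemma glue_injective2 (α α' : Perm (Fin a)) (β β' : Perm (Fin b))
    (h : glue α β = glue α' β') : α = α' ∧ β = β' := by
  constructor
  · apply Equiv.ext
    intro i
    have := congrArg (fun σ : Perm (Fin (a+1+b)) => ((σ (emL i)) : ℕ)) h
    rw [glue_emL, glue_emL] at this
    exact Fin.ext (by omega)
  · apply Equiv.ext
    intro j
    have := congrArg (fun σ : Perm (Fin (a+1+b)) => ((σ (emR j)) : ℕ)) h
    rw [glue_emR, glue_emR] at this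
    exact Fin.ext this

lemma permCongr_finCongr_rfl {m : ℕ} (σ : Perm (Fin m)) :
    (finCongr (rfl : m = m)).permCongr σ = σ := by
  apply Equiv.ext
  intro i
  simp

lemma avoids_permCongr {m m' : ℕ} (h : m = m') (σ : Perm (Fin m)) :
    Avoids132 ((finCongr h).permCongr σ) ↔ Avoids132 σ := by
  subst h
  rw [permCongr_finCongr_rfl]

lemma permCongr_permCongr_symm {m m' : ℕ} (h : m = m') (σ : Perm (Fin m')) :
    (finCongr h).permCongr ((finCongr h).symm.permCongr σ) = σ := by
  subst h
  have : (finCongr (rfl : m = m)).symm = finCongr (rfl : m = m) := rfl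
  rw [this, permCongr_finCongr_rfl, permCongr_finCongr_rfl]

set_option maxHeartbeats 1000000 in
lemma master (n : ℕ) (F : (m : ℕ) → Perm (Fin m) → ℕ)
    (hcast : ∀ (m m' : ℕ) (hm : m = m') (σ : Perm (Fin m)),
      F m' ((finCongr hm).permCongr σ) = F m σ)
    (hzero : ∀ σ : Perm (Fin (n+1)), ¬ Avoids132 σ → F (n+1) σ = 0) :
    ∑ σ : Perm (Fin (n+1)), F (n+1) σ
      = ∑ a ∈ Finset.range (n+1), ∑ α : Perm (Fin a), ∑ β : Perm (Fin (n-a)),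
          F (a + 1 + (n-a)) (glue α β) := by
  classical
  have htop : (n : ℕ) < n + 1 := Nat.lt_succ_self n
  rw [← Finset.sum_fiberwise_of_maps_to (g := fun σ : Perm (Fin (n+1)) => ((σ⁻¹ ⟨n, htop⟩ : Fin (n+1)) : ℕ))
    (fun σ _ => Finset.mem_range.mpr (Fin.isLt _))]
  apply Finset.sum_congr rfl
  intro a ha
  rw [Finset.mem_range] at ha
  have hb : a + 1 + (n - a) = n + 1 := by omega
  set b := n - a with hbdef
  set Φ : Perm (Fin a) × Perm (Fin b) → Perm (Fin (n+1)) :=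
    fun p => (finCongr hb).permCongr (glue p.1 p.2) with hΦ
  have hΦinj : Function.Injective Φ := by
    intro p q h
    have := (finCongr hb).permCongr.injective h
    obtain ⟨h1, h2⟩ := glue_injective2 _ _ _ _ this
    exact Prod.ext h1 h2
  have hΦval : ∀ (p : Perm (Fin a) × Perm (Fin b)) (i : Fin (n+1)),
      ((Φ p i : Fin (n+1)) : ℕ) = ((glue p.1 p.2 ⟨(i : ℕ), by omega⟩ : Fin (a+1+b)) : ℕ) := by
    intro p i
    rw [hΦ]
    simp only [Equiv.permCongr_apply, finCongr_apply, Fin.coe_cast]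
    congr 2
    all_goals first
    | (apply Fin.ext; simp)
    | rfl
  have hΦpos : ∀ p, ((Φ p)⁻¹ ⟨n, htop⟩ : ℕ) = a := by
    intro p
    have h1 : Φ p ⟨a, by omega⟩ = ⟨n, htop⟩ := by
      apply Fin.ext
      rw [hΦval p ⟨a, by omega⟩]
      rw [glue_mid p.1 p.2 _ rfl]
      show a + b = n
      omega
    have := congrArg (fun x => (Φ p)⁻¹ x) h1
    simp only [Equiv.Perm.inv_apply_self] at this
    rw [← this]
  have himg : Finset.univ.filter
        (fun σ : Perm (Fin (n+1)) => ((σ⁻¹ ⟨n, htop⟩ : Fin (n+1)) : ℕ) = a) ⊇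
      Finset.univ.image Φ := by
    intro σ hσ
    rw [Finset.mem_image] at hσ
    obtain ⟨p, _, rfl⟩ := hσ
    rw [Finset.mem_filter]
    exact ⟨Finset.mem_univ _, hΦpos p⟩
  have hvanish : ∀ σ ∈ Finset.univ.filter
      (fun σ : Perm (Fin (n+1)) => ((σ⁻¹ ⟨n, htop⟩ : Fin (n+1)) : ℕ) = a),
      σ ∉ Finset.univ.image Φ → F (n+1) σ = 0 := by
    intro σ hσ hnot
    rw [Finset.mem_filter] at hσ
    obtain ⟨_, hpos⟩ := hσ
    by_cases hav : Avoids132 σ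
    · exfalso
      apply hnot
      set σ' : Perm (Fin (a+1+b)) := (finCongr hb).symm.permCongr σ with hσ'
      have hav' : Avoids132 σ' := by
        rw [hσ']
        have : (finCongr hb).symm = finCongr hb.symm := rfl
        rw [this, avoids_permCongr]
        exact hav
      have hmax' : (σ' emM : ℕ) = a + b := by
        have hσ'app : (σ' emM : ℕ) = ((σ ((finCongr hb) emM)) : ℕ) := by
          rw [hσ']
          simp [Equiv.permCongr_apply]
        have hee : (finCongr hb) (emM : Fin (a+1+b)) = ⟨a, by omega⟩ := by
          apply Fin.ext
          simp [emM]
        have h2 : σ ⟨a, by omega⟩ = ⟨n, htop⟩ := by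
          have h3 : σ⁻¹ ⟨n, htop⟩ = ⟨a, by omega⟩ := Fin.ext hpos
          have h4 := congrArg σ h3
          rw [Equiv.Perm.apply_inv_self] at h4
          exact h4.symm
        rw [hσ'app, hee, h2]
        show n = a + b
        omega
      obtain ⟨α, β, hαβ⟩ := exists_glue σ' hav' hmax'
      rw [Finset.mem_image]
      refine ⟨(α, β), Finset.mem_univ _, ?_⟩
      rw [hΦ]
      simp only
      rw [← hαβ, hσ']
      exact permCongr_permCongr_symm hb σ
    · exact hzero σ hav
  rw [← Finset.sum_subset himg hvanish, Finset.sum_image (fun x _ y _ h => hΦinj h)]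
  rw [Fintype.sum_prod_type]
  apply Finset.sum_congr rfl
  intro α' _
  apply Finset.sum_congr rfl
  intro β' _
  rw [hΦ]
  exact hcast _ _ hb _

/-! ### sequences -/

open scoped Classical in
noncomputable def cnat (m : ℕ) : ℕ := ∑ σ : Perm (Fin m), if Avoids132 σ then 1 else 0
open scoped Classical in
noncomputable def Inat (m : ℕ) : ℕ := ∑ σ : Perm (Fin m), if Avoids132 σ then o21 σ else 0
open scoped Classical in
noncomputable def Jnat (m : ℕ) : ℕ := ∑ σ : Perm (Fin m), if Avoids132 σ then o12 σ else 0
open scoped Classical in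
noncomputable def Pnat (m : ℕ) : ℕ := ∑ σ : Perm (Fin m), if Avoids132 σ then o213 σ else 0
open scoped Classical in
noncomputable def Qnat (m : ℕ) : ℕ := ∑ σ : Perm (Fin m), if Avoids132 σ then o231 σ else 0

open scoped Classical

lemma sum_ite_one_mul {A : Type*} [Fintype A] (P : A → Prop) (f : A → ℕ) (c : ℕ) :
    (∑ x : A, if P x then f x + c else 0)
      = (∑ x : A, if P x then f x else 0) + c * (∑ x : A, if P x then 1 else 0) := by
  rw [Finset.mul_sum, ← Finset.sum_add_distrib]
  apply Finset.sum_congr rfl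
  intro x _
  by_cases h : P x <;> simp [h]

lemma double_ite {A B : Type*} [Fintype A] [Fintype B] (P : A → Prop) (Q : B → Prop)
    (f : A → ℕ) (g : B → ℕ) :
    (∑ x : A, ∑ y : B, if P x ∧ Q y then f x + g y else 0)
      = (∑ x : A, if P x then f x else 0) * (∑ y : B, if Q y then 1 else 0)
      + (∑ x : A, if P x then 1 else 0) * (∑ y : B, if Q y then g y else 0) := by
  rw [Finset.sum_mul_sum, Finset.sum_mul_sum, ← Finset.sum_add_distrib]
  apply Finset.sum_congr rfl
  intro x _
  rw [← Finset.sum_add_distrib]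
  apply Finset.sum_congr rfl
  intro y _
  by_cases hP : P x <;> by_cases hQ : Q y <;> simp [hP, hQ]

lemma cnat_rec (n : ℕ) : cnat (n+1) = ∑ a ∈ Finset.range (n+1), cnat a * cnat (n-a) := by
  rw [cnat, master n (fun m σ => if Avoids132 σ then 1 else 0)
    (by intro m m' hm σ; subst hm; rw [permCongr_finCongr_rfl]) (fun σ h => if_neg h)]
  apply Finset.sum_congr rfl
  intro a _
  have : (∑ α : Perm (Fin a), ∑ β : Perm (Fin (n-a)),
      if Avoids132 (glue α β) then 1 else 0)
      = ∑ α : Perm (Fin a), ∑ β : Perm (Fin (n-a)),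
        if Avoids132 α ∧ Avoids132 β then 0 + 0 + 1 else 0 := by
    apply Finset.sum_congr rfl; intro α _
    apply Finset.sum_congr rfl; intro β _
    rw [avoids_glue_iff]
    norm_num
  rw [this]
  have := double_ite (fun α : Perm (Fin a) => Avoids132 α)
    (fun β : Perm (Fin (n-a)) => Avoids132 β) (fun _ => 0 + 0 + 1) (fun _ => 0)
  simp only [add_zero] at this ⊢
  rw [this]
  simp [cnat]

lemma Inat_rec (n : ℕ) : Inat (n+1) = ∑ a ∈ Finset.range (n+1),
    (Inat a * cnat (n-a) + cnat a * Inat (n-a) + (a * (n-a) + (n-a)) * (cnat a * cnat (n-a))) := by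
  rw [Inat, master n (fun m σ => if Avoids132 σ then o21 σ else 0)
    (by intro m m' hm σ; subst hm; rw [permCongr_finCongr_rfl]) (fun σ h => if_neg h)]
  apply Finset.sum_congr rfl
  intro a _
  have h1 : (∑ α : Perm (Fin a), ∑ β : Perm (Fin (n-a)),
      if Avoids132 (glue α β) then o21 (glue α β) else 0)
      = ∑ α : Perm (Fin a), ∑ β : Perm (Fin (n-a)),
        if Avoids132 α ∧ Avoids132 β then (o21 α + (a * (n-a) + (n-a))) + o21 β else 0 := by
    apply Finset.sum_congr rfl; intro α _
    apply Finset.sum_congr rfl; intro β _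
    rw [avoids_glue_iff, o21_glue]
    congr 1
    omega
  rw [h1, double_ite, sum_ite_one_mul]
  show (Inat a + (a * (n-a) + (n-a)) * cnat a) * cnat (n-a) + cnat a * Inat (n-a) = _
  ring

lemma Jnat_rec (n : ℕ) : Jnat (n+1) = ∑ a ∈ Finset.range (n+1),
    (Jnat a * cnat (n-a) + cnat a * Jnat (n-a) + a * (cnat a * cnat (n-a))) := by
  rw [Jnat, master n (fun m σ => if Avoids132 σ then o12 σ else 0)
    (by intro m m' hm σ; subst hm; rw [permCongr_finCongr_rfl]) (fun σ h => if_neg h)]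
  apply Finset.sum_congr rfl
  intro a _
  have h1 : (∑ α : Perm (Fin a), ∑ β : Perm (Fin (n-a)),
      if Avoids132 (glue α β) then o12 (glue α β) else 0)
      = ∑ α : Perm (Fin a), ∑ β : Perm (Fin (n-a)),
        if Avoids132 α ∧ Avoids132 β then (o12 α + a) + o12 β else 0 := by
    apply Finset.sum_congr rfl; intro α _
    apply Finset.sum_congr rfl; intro β _
    rw [avoids_glue_iff, o12_glue]
    congr 1
    omega
  rw [h1, double_ite, sum_ite_one_mul]
  show (Jnat a + a * cnat a) * cnat (n-a) + cnat a * Jnat (n-a) = _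
  ring

lemma Pnat_rec (n : ℕ) : Pnat (n+1) = ∑ a ∈ Finset.range (n+1),
    (Pnat a * cnat (n-a) + cnat a * Pnat (n-a) + Inat a * cnat (n-a)) := by
  rw [Pnat, master n (fun m σ => if Avoids132 σ then o213 σ else 0)
    (by intro m m' hm σ; subst hm; rw [permCongr_finCongr_rfl]) (fun σ h => if_neg h)]
  apply Finset.sum_congr rfl
  intro a _
  have h1 : (∑ α : Perm (Fin a), ∑ β : Perm (Fin (n-a)),
      if Avoids132 (glue α β) then o213 (glue α β) else 0)
      = ∑ α : Perm (Fin a), ∑ β : Perm (Fin (n-a)),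
        if Avoids132 α ∧ Avoids132 β then (o213 α + o21 α) + o213 β else 0 := by
    apply Finset.sum_congr rfl; intro α _
    apply Finset.sum_congr rfl; intro β _
    rw [avoids_glue_iff, o213_glue]
    congr 1
    omega
  rw [h1, double_ite]
  have h2 : (∑ α : Perm (Fin a), if Avoids132 α then o213 α + o21 α else 0)
      = Pnat a + Inat a := by
    rw [Pnat, Inat, ← Finset.sum_add_distrib]
    apply Finset.sum_congr rfl
    intro α _
    by_cases h : Avoids132 α <;> simp [h]
  rw [h2]
  show (Pnat a + Inat a) * cnat (n-a) + cnat a * Pnat (n-a) = _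
  ring

lemma Qnat_rec (n : ℕ) : Qnat (n+1) = ∑ a ∈ Finset.range (n+1),
    (Qnat a * cnat (n-a) + cnat a * Qnat (n-a)
      + (Jnat a * (n-a) + a * (n-a) * cnat a) * cnat (n-a)) := by
  rw [Qnat, master n (fun m σ => if Avoids132 σ then o231 σ else 0)
    (by intro m m' hm σ; subst hm; rw [permCongr_finCongr_rfl]) (fun σ h => if_neg h)]
  apply Finset.sum_congr rfl
  intro a _
  have h1 : (∑ α : Perm (Fin a), ∑ β : Perm (Fin (n-a)),
      if Avoids132 (glue α β) then o231 (glue α β) else 0)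
      = ∑ α : Perm (Fin a), ∑ β : Perm (Fin (n-a)),
        if Avoids132 α ∧ Avoids132 β then (o231 α + (o12 α * (n-a) + a * (n-a))) + o231 β
          else 0 := by
    apply Finset.sum_congr rfl; intro α _
    apply Finset.sum_congr rfl; intro β _
    rw [avoids_glue_iff, o231_glue]
    congr 1
    omega
  rw [h1, double_ite]
  have h2 : (∑ α : Perm (Fin a), if Avoids132 α then o231 α + (o12 α * (n-a) + a * (n-a)) else 0)
      = Qnat a + Jnat a * (n-a) + a * (n-a) * cnat a := by
    rw [Qnat, Jnat, cnat, Finset.sum_mul, ← Finset.sum_add_distrib, Finset.mul_sum,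
      ← Finset.sum_add_distrib]
    apply Finset.sum_congr rfl
    intro α _
    by_cases h : Avoids132 α <;> simp [h]
    ring
  rw [h2]
  show (Qnat a + Jnat a * (n-a) + a * (n-a) * cnat a) * cnat (n-a) + cnat a * Qnat (n-a) = _
  ring

/-! ### power series -/

open PowerSeries

noncomputable def CS : PowerSeries ℤ := PowerSeries.mk fun m => (cnat m : ℤ)
noncomputable def DS : PowerSeries ℤ := PowerSeries.mk fun m => (m : ℤ) * (cnat m : ℤ)
noncomputable def IS : PowerSeries ℤ := PowerSeries.mk fun m => (Inat m : ℤ)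
noncomputable def JS : PowerSeries ℤ := PowerSeries.mk fun m => (Jnat m : ℤ)
noncomputable def PS2 : PowerSeries ℤ := PowerSeries.mk fun m => (Pnat m : ℤ)
noncomputable def QS2 : PowerSeries ℤ := PowerSeries.mk fun m => (Qnat m : ℤ)

lemma cnat_zero : cnat 0 = 1 := by
  rw [cnat]
  rw [Finset.sum_eq_single 1]
  · rw [if_pos]
    rintro ⟨x, _, _⟩
    exact x.elim0
  · intro σ _ hσ
    exfalso
    apply hσ
    apply Equiv.ext
    intro x
    exact x.elim0
  · intro h
    exact absurd (Finset.mem_univ _) h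

lemma o21_zero (σ : Perm (Fin 0)) : o21 σ = 0 := by
  rw [o21, Finset.card_eq_zero, Finset.eq_empty_iff_forall_notMem]
  rintro ⟨x, _⟩ _
  exact x.elim0

lemma o12_zero (σ : Perm (Fin 0)) : o12 σ = 0 := by
  rw [o12, Finset.card_eq_zero, Finset.eq_empty_iff_forall_notMem]
  rintro ⟨x, _⟩ _
  exact x.elim0

lemma o213_zero (σ : Perm (Fin 0)) : o213 σ = 0 := by
  rw [o213, Finset.card_eq_zero, Finset.eq_empty_iff_forall_notMem]
  rintro ⟨x, _⟩ _
  exact x.elim0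

lemma o231_zero (σ : Perm (Fin 0)) : o231 σ = 0 := by
  rw [o231, Finset.card_eq_zero, Finset.eq_empty_iff_forall_notMem]
  rintro ⟨x, _⟩ _
  exact x.elim0

lemma Inat_zero : Inat 0 = 0 := by
  rw [Inat]
  apply Finset.sum_eq_zero
  intro σ _
  rw [o21_zero]
  simp

lemma Jnat_zero : Jnat 0 = 0 := by
  rw [Jnat]
  apply Finset.sum_eq_zero
  intro σ _
  rw [o12_zero]
  simp

lemma Pnat_zero : Pnat 0 = 0 := by
  rw [Pnat]
  apply Finset.sum_eq_zero
  intro σ _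
  rw [o213_zero]
  simp

lemma Qnat_zero : Qnat 0 = 0 := by
  rw [Qnat]
  apply Finset.sum_eq_zero
  intro σ _
  rw [o231_zero]
  simp

lemma reflect_sum (n : ℕ) (f : ℕ → ℕ → ℕ) :
    ∑ a ∈ Finset.range (n+1), f a (n-a) = ∑ a ∈ Finset.range (n+1), f (n-a) a := by
  rw [← Finset.sum_range_reflect]
  apply Finset.sum_congr rfl
  intro a ha
  rw [Finset.mem_range] at ha
  congr 1
  omega

lemma CS_eq : CS = 1 + X * CS^2 := by
  ext n
  rcases n with _ | n
  · simp [CS, cnat_zero]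
  · rw [map_add, PowerSeries.coeff_one, if_neg (Nat.succ_ne_zero n), zero_add, sq,
      PowerSeries.coeff_succ_X_mul, PowerSeries.coeff_mul,
      Finset.Nat.sum_antidiagonal_eq_sum_range_succ_mk]
    simp only [CS, PowerSeries.coeff_mk]
    have h2 : (cnat (n+1) : ℤ) = ∑ a ∈ Finset.range (n+1), (cnat a : ℤ) * (cnat (n-a) : ℤ) := by
      exact_mod_cast cnat_rec n
    rw [h2]

lemma DS_eq : DS = X * CS^2 + 2 * (X * (CS * DS)) := by
  have key : ∀ n : ℕ, (n+1) * cnat (n+1)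
      = (∑ a ∈ Finset.range (n+1), cnat a * cnat (n-a))
        + 2 * ∑ a ∈ Finset.range (n+1), cnat a * ((n-a) * cnat (n-a)) := by
    intro n
    rw [cnat_rec n, Finset.mul_sum]
    have h1 : ∑ a ∈ Finset.range (n+1), (n+1) * (cnat a * cnat (n-a))
        = ∑ a ∈ Finset.range (n+1), (cnat a * cnat (n-a)
            + (a * cnat a * cnat (n-a) + cnat a * ((n-a) * cnat (n-a)))) := by
      apply Finset.sum_congr rfl
      intro a ha
      rw [Finset.mem_range] at ha
      have : n + 1 = 1 + a + (n - a) := by omega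
      rw [this]
      ring
    rw [h1, Finset.sum_add_distrib, Finset.sum_add_distrib]
    have h2 : ∑ a ∈ Finset.range (n+1), a * cnat a * cnat (n-a)
        = ∑ a ∈ Finset.range (n+1), cnat a * ((n-a) * cnat (n-a)) := by
      rw [reflect_sum n (fun x y => x * cnat x * cnat y)]
      apply Finset.sum_congr rfl
      intro a _
      ring
    rw [h2]
    ring
  have coeff_two_mul : ∀ (f : PowerSeries ℤ) (n : ℕ),
      PowerSeries.coeff n (2 * f) = 2 * PowerSeries.coeff n f := by
    intro f n
    rw [show (2 : PowerSeries ℤ) = PowerSeries.C 2 from (map_ofNat (PowerSeries.C) 2).symm,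
      PowerSeries.coeff_C_mul]
  ext n
  rcases n with _ | n
  · simp [DS]
  · rw [map_add, sq, PowerSeries.coeff_succ_X_mul, PowerSeries.coeff_mul,
      Finset.Nat.sum_antidiagonal_eq_sum_range_succ_mk, coeff_two_mul,
      PowerSeries.coeff_succ_X_mul, PowerSeries.coeff_mul,
      Finset.Nat.sum_antidiagonal_eq_sum_range_succ_mk]
    simp only [DS, CS, PowerSeries.coeff_mk]
    exact_mod_cast key n

lemma coeff_two_mul' (f : PowerSeries ℤ) (n : ℕ) :
    PowerSeries.coeff n (2 * f) = 2 * PowerSeries.coeff n f := by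
  rw [show (2 : PowerSeries ℤ) = PowerSeries.C 2 from (map_ofNat (PowerSeries.C) 2).symm,
    PowerSeries.coeff_C_mul]

lemma Ikey (n : ℕ) : Inat (n+1)
    = 2 * (∑ a ∈ Finset.range (n+1), cnat a * Inat (n-a))
      + ∑ a ∈ Finset.range (n+1), (cnat a + a * cnat a) * ((n-a) * cnat (n-a)) := by
  rw [Inat_rec n, Finset.sum_add_distrib, Finset.sum_add_distrib]
  have hr : ∑ a ∈ Finset.range (n+1), Inat a * cnat (n-a)
      = ∑ a ∈ Finset.range (n+1), cnat a * Inat (n-a) := by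
    rw [reflect_sum n (fun x y => Inat x * cnat y)]
    exact Finset.sum_congr rfl fun a _ => mul_comm _ _
  have ht : ∑ a ∈ Finset.range (n+1), (a * (n-a) + (n-a)) * (cnat a * cnat (n-a))
      = ∑ a ∈ Finset.range (n+1), (cnat a + a * cnat a) * ((n-a) * cnat (n-a)) := by
    exact Finset.sum_congr rfl fun a _ => by ring
  rw [hr, ht]
  ring

lemma Jkey (n : ℕ) : Jnat (n+1)
    = 2 * (∑ a ∈ Finset.range (n+1), cnat a * Jnat (n-a))
      + ∑ a ∈ Finset.range (n+1), cnat a * ((n-a) * cnat (n-a)) := by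
  rw [Jnat_rec n, Finset.sum_add_distrib, Finset.sum_add_distrib]
  have hr : ∑ a ∈ Finset.range (n+1), Jnat a * cnat (n-a)
      = ∑ a ∈ Finset.range (n+1), cnat a * Jnat (n-a) := by
    rw [reflect_sum n (fun x y => Jnat x * cnat y)]
    exact Finset.sum_congr rfl fun a _ => mul_comm _ _
  have ht : ∑ a ∈ Finset.range (n+1), a * (cnat a * cnat (n-a))
      = ∑ a ∈ Finset.range (n+1), cnat a * ((n-a) * cnat (n-a)) := by
    rw [reflect_sum n (fun x y => x * (cnat x * cnat y))]
    exact Finset.sum_congr rfl fun a _ => by ring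
  rw [hr, ht]
  ring

lemma Pkey (n : ℕ) : Pnat (n+1)
    = 2 * (∑ a ∈ Finset.range (n+1), cnat a * Pnat (n-a))
      + ∑ a ∈ Finset.range (n+1), cnat a * Inat (n-a) := by
  rw [Pnat_rec n, Finset.sum_add_distrib, Finset.sum_add_distrib]
  have hr : ∑ a ∈ Finset.range (n+1), Pnat a * cnat (n-a)
      = ∑ a ∈ Finset.range (n+1), cnat a * Pnat (n-a) := by
    rw [reflect_sum n (fun x y => Pnat x * cnat y)]
    exact Finset.sum_congr rfl fun a _ => mul_comm _ _
  have ht : ∑ a ∈ Finset.range (n+1), Inat a * cnat (n-a)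
      = ∑ a ∈ Finset.range (n+1), cnat a * Inat (n-a) := by
    rw [reflect_sum n (fun x y => Inat x * cnat y)]
    exact Finset.sum_congr rfl fun a _ => mul_comm _ _
  rw [hr, ht]
  ring

lemma Qkey (n : ℕ) : Qnat (n+1)
    = 2 * (∑ a ∈ Finset.range (n+1), cnat a * Qnat (n-a))
      + ∑ a ∈ Finset.range (n+1),
          (Jnat a * ((n-a) * cnat (n-a)) + (a * cnat a) * ((n-a) * cnat (n-a))) := by
  rw [Qnat_rec n, Finset.sum_add_distrib, Finset.sum_add_distrib]
  have hr : ∑ a ∈ Finset.range (n+1), Qnat a * cnat (n-a)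
      = ∑ a ∈ Finset.range (n+1), cnat a * Qnat (n-a) := by
    rw [reflect_sum n (fun x y => Qnat x * cnat y)]
    exact Finset.sum_congr rfl fun a _ => mul_comm _ _
  have ht : ∑ a ∈ Finset.range (n+1), (Jnat a * (n-a) + a * (n-a) * cnat a) * cnat (n-a)
      = ∑ a ∈ Finset.range (n+1),
          (Jnat a * ((n-a) * cnat (n-a)) + (a * cnat a) * ((n-a) * cnat (n-a))) := by
    exact Finset.sum_congr rfl fun a _ => by ring
  rw [hr, ht]
  ring

lemma IS_eq : IS = 2 * (X * (CS * IS)) + X * ((CS + DS) * DS) := by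
  ext n
  rcases n with _ | n
  · simp [IS, Inat_zero]
  · rw [map_add, coeff_two_mul', PowerSeries.coeff_succ_X_mul, PowerSeries.coeff_mul,
      Finset.Nat.sum_antidiagonal_eq_sum_range_succ_mk,
      PowerSeries.coeff_succ_X_mul, PowerSeries.coeff_mul,
      Finset.Nat.sum_antidiagonal_eq_sum_range_succ_mk]
    simp only [IS, CS, DS, PowerSeries.coeff_mk, map_add]
    exact_mod_cast Ikey n

lemma JS_eq : JS = 2 * (X * (CS * JS)) + X * (CS * DS) := by
  ext n
  rcases n with _ | n
  · simp [JS, Jnat_zero]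
  · rw [map_add, coeff_two_mul', PowerSeries.coeff_succ_X_mul, PowerSeries.coeff_mul,
      Finset.Nat.sum_antidiagonal_eq_sum_range_succ_mk,
      PowerSeries.coeff_succ_X_mul, PowerSeries.coeff_mul,
      Finset.Nat.sum_antidiagonal_eq_sum_range_succ_mk]
    simp only [JS, CS, DS, PowerSeries.coeff_mk]
    exact_mod_cast Jkey n

lemma PS2_eq : PS2 = 2 * (X * (CS * PS2)) + X * (CS * IS) := by
  ext n
  rcases n with _ | n
  · simp [PS2, Pnat_zero]
  · rw [map_add, coeff_two_mul', PowerSeries.coeff_succ_X_mul, PowerSeries.coeff_mul,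
      Finset.Nat.sum_antidiagonal_eq_sum_range_succ_mk,
      PowerSeries.coeff_succ_X_mul, PowerSeries.coeff_mul,
      Finset.Nat.sum_antidiagonal_eq_sum_range_succ_mk]
    simp only [PS2, CS, IS, PowerSeries.coeff_mk]
    exact_mod_cast Pkey n

lemma QS2_eq : QS2 = 2 * (X * (CS * QS2)) + X * (JS * DS + DS * DS) := by
  ext n
  rcases n with _ | n
  · simp [QS2, Qnat_zero]
  · rw [map_add, coeff_two_mul', PowerSeries.coeff_succ_X_mul, PowerSeries.coeff_mul,
      Finset.Nat.sum_antidiagonal_eq_sum_range_succ_mk,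
      PowerSeries.coeff_succ_X_mul, map_add, PowerSeries.coeff_mul, PowerSeries.coeff_mul,
      Finset.Nat.sum_antidiagonal_eq_sum_range_succ_mk,
      Finset.Nat.sum_antidiagonal_eq_sum_range_succ_mk, ← Finset.sum_add_distrib]
    simp only [QS2, CS, DS, JS, PowerSeries.coeff_mk]
    exact_mod_cast Qkey n

lemma Pnat_eq_Qnat (n : ℕ) : Pnat n = Qnat n := by
  have hPQ : PS2 = QS2 := by
    set u : PowerSeries ℤ := 1 - 2 * (X * CS) with hu
    have hunit : IsUnit u := by
      rw [PowerSeries.isUnit_iff_constantCoeff]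
      have hcc : PowerSeries.constantCoeff u = 1 := by
        rw [hu, map_sub, map_one, map_mul, map_mul]
        simp
      rw [hcc]
      exact isUnit_one
    have h1 : u * DS = X * CS^2 := by rw [hu]; linear_combination DS_eq
    have h2 : u * JS = X * (CS * DS) := by rw [hu]; linear_combination JS_eq
    have h3 : u * IS = X * ((CS + DS) * DS) := by rw [hu]; linear_combination IS_eq
    have h4 : u * PS2 = X * (CS * IS) := by rw [hu]; linear_combination PS2_eq
    have h5 : u * QS2 = X * (JS * DS + DS * DS) := by rw [hu]; linear_combination QS2_eq
    have key : u * (CS * IS) = u * (DS * DS + DS * JS) := by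
      linear_combination CS * h3 - DS * h1 - DS * h2
    have key2 : CS * IS = DS * DS + DS * JS := hunit.mul_left_cancel key
    have h6 : u * PS2 = u * QS2 := by
      rw [h4, h5]
      linear_combination X * key2
    exact hunit.mul_left_cancel h6
  have := congrArg (PowerSeries.coeff n) hPQ
  simp only [PS2, QS2, PowerSeries.coeff_mk] at this
  exact_mod_cast this

/-! ### bridge to numOcc/pop -/

section Bridge
variable {n : ℕ} (σ : Perm (Fin n))

lemma strictMono3 {f : Fin 3 → Fin n} (h01 : f 0 < f 1) (h12 : f 1 < f 2) : StrictMono f := by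
  intro x y hxy
  fin_cases x <;> fin_cases y <;>
    first
      | exact absurd hxy (by decide)
      | exact h01
      | exact h12
      | exact lt_trans h01 h12

lemma isOcc_p213 (s : Fin 3 → Fin n) :
    IsOccurrence p213 σ s ↔ s 0 < s 1 ∧ s 1 < s 2 ∧ σ (s 1) < σ (s 0) ∧ σ (s 0) < σ (s 2) := by
  constructor
  · rintro ⟨hm, hc⟩
    exact ⟨hm (by decide), hm (by decide), (hc 1 0).mpr (by decide), (hc 0 2).mpr (by decide)⟩
  · rintro ⟨h1, h2, h3, h4⟩
    refine ⟨strictMono3 h1 h2, ?_⟩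
    intro x y
    simp only [Fin.lt_def] at h3 h4 ⊢
    have h5 : (σ (s 1) : ℕ) < σ (s 2) := by omega
    fin_cases x <;> fin_cases y <;>
      simp only [show (⟨0, by omega⟩ : Fin 3) = 0 from rfl,
        show (⟨1, by omega⟩ : Fin 3) = 1 from rfl,
        show (⟨2, by omega⟩ : Fin 3) = 2 from rfl] <;>
      first
        | exact iff_of_true (by omega) (by decide)
        | exact iff_of_false (by omega) (by decide)

lemma isOcc_p231 (s : Fin 3 → Fin n) :
    IsOccurrence p231 σ s ↔ s 0 < s 1 ∧ s 1 < s 2 ∧ σ (s 2) < σ (s 0) ∧ σ (s 0) < σ (s 1) := by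
  constructor
  · rintro ⟨hm, hc⟩
    exact ⟨hm (by decide), hm (by decide), (hc 2 0).mpr (by decide), (hc 0 1).mpr (by decide)⟩
  · rintro ⟨h1, h2, h3, h4⟩
    refine ⟨strictMono3 h1 h2, ?_⟩
    intro x y
    simp only [Fin.lt_def] at h3 h4 ⊢
    have h5 : (σ (s 2) : ℕ) < σ (s 1) := by omega
    fin_cases x <;> fin_cases y <;>
      simp only [show (⟨0, by omega⟩ : Fin 3) = 0 from rfl,
        show (⟨1, by omega⟩ : Fin 3) = 1 from rfl,
        show (⟨2, by omega⟩ : Fin 3) = 2 from rfl] <;>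
      first
        | exact iff_of_true (by omega) (by decide)
        | exact iff_of_false (by omega) (by decide)

lemma isOcc_p312 (s : Fin 3 → Fin n) :
    IsOccurrence p312 σ s ↔ s 0 < s 1 ∧ s 1 < s 2 ∧ σ (s 1) < σ (s 2) ∧ σ (s 2) < σ (s 0) := by
  constructor
  · rintro ⟨hm, hc⟩
    exact ⟨hm (by decide), hm (by decide), (hc 1 2).mpr (by decide), (hc 2 0).mpr (by decide)⟩
  · rintro ⟨h1, h2, h3, h4⟩
    refine ⟨strictMono3 h1 h2, ?_⟩
    intro x y
    simp only [Fin.lt_def] at h3 h4 ⊢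
    have h5 : (σ (s 1) : ℕ) < σ (s 0) := by omega
    fin_cases x <;> fin_cases y <;>
      simp only [show (⟨0, by omega⟩ : Fin 3) = 0 from rfl,
        show (⟨1, by omega⟩ : Fin 3) = 1 from rfl,
        show (⟨2, by omega⟩ : Fin 3) = 2 from rfl] <;>
      first
        | exact iff_of_true (by omega) (by decide)
        | exact iff_of_false (by omega) (by decide)

open scoped Classical in
lemma card_occ_eq (P : (Fin 3 → Fin n) → Prop)
    (C : Fin n × Fin n × Fin n → Prop)
    (hPC : ∀ s, P s ↔ C (s 0, s 1, s 2)) :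
    Nat.card {s : Fin 3 → Fin n // P s} = (Finset.univ.filter C).card := by
  have e : {s : Fin 3 → Fin n // P s} ≃ {t : Fin n × Fin n × Fin n // C t} :=
    { toFun := fun s => ⟨(s.1 0, s.1 1, s.1 2), (hPC s.1).mp s.2⟩
      invFun := fun t => ⟨![t.1.1, t.1.2.1, t.1.2.2], (hPC _).mpr (by
        simpa using t.2)⟩
      left_inv := fun s => by
        apply Subtype.ext
        funext x
        fin_cases x <;> rfl
      right_inv := fun t => by
        apply Subtype.ext
        rfl }
  rw [Nat.card_congr e, Nat.card_eq_fintype_card, Fintype.card_subtype]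

lemma numOcc_p213 : numOcc p213 σ = o213 σ := by
  classical
  rw [numOcc, o213, card_occ_eq (P := IsOccurrence p213 σ)
    (C := fun t => t.1 < t.2.1 ∧ t.2.1 < t.2.2 ∧ σ t.2.1 < σ t.1 ∧ σ t.1 < σ t.2.2) (isOcc_p213 σ)]
  exact Finset.card_bij (fun t _ => t) (fun t ht => by simpa using ht)
    (fun _ _ _ _ h => h) (fun t ht => ⟨t, by simpa using ht, rfl⟩)

lemma numOcc_p231 : numOcc p231 σ = o231 σ := by
  classical
  rw [numOcc, o231, card_occ_eq (P := IsOccurrence p231 σ)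
    (C := fun t => t.1 < t.2.1 ∧ t.2.1 < t.2.2 ∧ σ t.2.2 < σ t.1 ∧ σ t.1 < σ t.2.1) (isOcc_p231 σ)]
  exact Finset.card_bij (fun t _ => t) (fun t ht => by simpa using ht)
    (fun _ _ _ _ h => h) (fun t ht => ⟨t, by simpa using ht, rfl⟩)

lemma numOcc_p312 : numOcc p312 σ = o312 σ := by
  classical
  rw [numOcc, o312, card_occ_eq (P := IsOccurrence p312 σ)
    (C := fun t => t.1 < t.2.1 ∧ t.2.1 < t.2.2 ∧ σ t.2.1 < σ t.2.2 ∧ σ t.2.2 < σ t.1) (isOcc_p312 σ)]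
  exact Finset.card_bij (fun t _ => t) (fun t ht => by simpa using ht)
    (fun _ _ _ _ h => h) (fun t ht => ⟨t, by simpa using ht, rfl⟩)

end Bridge

section Final
variable {n : ℕ}

lemma pattern_inv (σ : Perm (Fin n))
    (h : ∃ a b c : Fin n, a < b ∧ b < c ∧ σ a < σ c ∧ σ c < σ b) :
    ∃ a b c : Fin n, a < b ∧ b < c ∧ σ⁻¹ a < σ⁻¹ c ∧ σ⁻¹ c < σ⁻¹ b := by
  obtain ⟨x, y, z, hxy, hyz, h1, h2⟩ := h
  refine ⟨σ x, σ z, σ y, h1, h2, ?_, ?_⟩ <;> simp [hxy, hyz]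

lemma avoids_inv_iff (σ : Perm (Fin n)) : Avoids132 σ⁻¹ ↔ Avoids132 σ := by
  constructor
  · intro h hp
    exact h (pattern_inv σ hp)
  · intro h hp
    apply h
    have := pattern_inv σ⁻¹ hp
    simpa using this

lemma o231_inv (σ : Perm (Fin n)) : o231 σ = o312 σ⁻¹ := by
  classical
  rw [o231, o312]
  apply Finset.card_bij' (fun t _ => ((σ t.2.2 : Fin n), (σ t.1 : Fin n), (σ t.2.1 : Fin n)))
    (fun u _ => ((σ⁻¹ u.2.1 : Fin n), (σ⁻¹ u.2.2 : Fin n), (σ⁻¹ u.1 : Fin n)))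
  · rintro ⟨i, j, k⟩ ht
    simp only [Finset.mem_filter, Finset.mem_univ, true_and] at ht ⊢
    obtain ⟨h1, h2, h3, h4⟩ := ht
    simp only [Equiv.Perm.inv_apply_self]
    exact ⟨h3, h4, h1, h2⟩
  · rintro ⟨x, y, z⟩ hu
    simp only [Finset.mem_filter, Finset.mem_univ, true_and] at hu ⊢
    obtain ⟨h1, h2, h3, h4⟩ := hu
    simp only [Equiv.Perm.apply_inv_self]
    exact ⟨h3, h4, h1, h2⟩
  · rintro ⟨i, j, k⟩ _
    simp
  · rintro ⟨x, y, z⟩ _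
    simp

open scoped Classical in
lemma pop_eq_P : pop n p213 = Pnat n := by
  rw [pop, Pnat]
  apply Finset.sum_congr rfl
  intro σ _
  by_cases h : Avoids132 σ <;> simp [h, numOcc_p213]

open scoped Classical in
lemma pop_eq_Q : pop n p231 = Qnat n := by
  rw [pop, Qnat]
  apply Finset.sum_congr rfl
  intro σ _
  by_cases h : Avoids132 σ <;> simp [h, numOcc_p231]

open scoped Classical in
lemma pop_eq_Q' : pop n p312 = Qnat n := by
  rw [pop, Qnat]
  rw [Fintype.sum_equiv (Equiv.inv (Perm (Fin n)))
    (fun σ => if Avoids132 σ then o231 σ else 0)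
    (fun σ => if Avoids132 σ then numOcc p312 σ else 0) ?_]
  intro σ
  simp only [Equiv.inv_apply]
  by_cases h : Avoids132 σ
  · rw [if_pos h, if_pos ((avoids_inv_iff σ).mpr h), numOcc_p312, ← o231_inv]
  · rw [if_neg h, if_neg (fun hc => h ((avoids_inv_iff σ).mp hc))]

end Final

end PopWork

/-- for `n ≥ 3`, `A_n(213) = A_n(231) = A_n(312)`. -/
theorem pop_213_231_312 (n : ℕ) (hn : 3 ≤ n) :
    pop n p213 = pop n p231 ∧ pop n p231 = pop n p312 := by
  refine ⟨?_, ?_⟩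
  · rw [PopWork.pop_eq_P, PopWork.pop_eq_Q, PopWork.Pnat_eq_Qnat]
  · rw [PopWork.pop_eq_Q, PopWork.pop_eq_Q']
end

section
/- The bijection σ ↦ T(σ) between 132-avoiding permutations of {1,…,n} and binary trees on n vertices has the parent-characterization property: for σ ∈ S_n(132) and any position α with σ_α ≤ n−1, the parent of the vertex labelled σ_α in T(σ) is the vertex labelled σ_β, where σ_β is the least value greater than σ_α such that all entries of σ at positions strictly between β and α (in either order, β < α or β > α) are less than σ_α. -/
lemma le_foldr_max (l : List ℕ) {x : ℕ} (h : x ∈ l) : x ≤ l.foldr max 0 := by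
  induction l with
  | nil => simp at h
  | cons a t ih =>
    rcases List.mem_cons.mp h with h | h
    · subst h; exact le_max_left _ _
    · exact (ih h).trans (le_max_right _ _)

lemma foldr_max_mem (l : List ℕ) (h : l ≠ []) : l.foldr max 0 ∈ l := by
  induction l with
  | nil => simp at h
  | cons a t ih =>
    rcases eq_or_ne t [] with rfl | ht
    · simp
    · rcases le_total a (t.foldr max 0) with h' | h'
      · simp only [List.foldr_cons, max_eq_right h']
        exact List.mem_cons_of_mem _ (ih ht)
      · simp only [List.foldr_cons, max_eq_left h']
        exact List.mem_cons_self

lemma toTreeLAux_fuel (N : ℕ) : ∀ (l : List ℕ), l.length ≤ N → ∀ f, l.length ≤ f →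
    toTreeLAux f l = toTreeL l := by
  induction N with
  | zero =>
    intro l hl f hf
    have : l = [] := List.length_eq_zero_iff.mp (Nat.le_zero.mp hl)
    subst this
    cases f <;> rfl
  | succ N ih =>
    intro l hl f hf
    match l, f with
    | [], f => cases f <;> rfl
    | a :: t, f + 1 =>
      show _ = toTreeLAux ((a :: t).length) (a :: t)
      have hlen : (a :: t).length = t.length + 1 := rfl
      rw [hlen]
      simp only [toTreeLAux]
      have hm : (a :: t).idxOf ((a :: t).foldr max 0) < (a :: t).length :=
        List.idxOf_lt_length_iff.mpr (foldr_max_mem _ (by simp))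
      simp only [List.foldr_cons, List.length_cons] at hm
      simp only [List.length_cons] at hl hf
      congr 1
      · rw [ih _ (by simp only [List.foldr_cons, List.length_take, List.length_cons]; omega) _
            (by simp only [List.foldr_cons, List.length_take, List.length_cons]; omega),
          ih _ (by simp only [List.foldr_cons, List.length_take, List.length_cons]; omega) _
            (by simp only [List.foldr_cons, List.length_take, List.length_cons]; omega)]
      · rw [ih _ (by simp only [List.foldr_cons, List.length_drop, List.length_cons]; omega) _
            (by simp only [List.foldr_cons, List.length_drop, List.length_cons]; omega),
          ih _ (by simp only [List.foldr_cons, List.length_drop, List.length_cons]; omega) _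
            (by simp only [List.foldr_cons, List.length_drop, List.length_cons]; omega)]

lemma toTreeL_unfold (l : List ℕ) (h : l ≠ []) :
    toTreeL l = Tree.node (l.foldr max 0)
      (toTreeL (l.take (l.idxOf (l.foldr max 0))))
      (toTreeL (l.drop (l.idxOf (l.foldr max 0) + 1))) := by
  match l with
  | a :: t =>
    show toTreeLAux (t.length + 1) (a :: t) = _
    simp only [toTreeLAux]
    have hm : (a :: t).idxOf ((a :: t).foldr max 0) < (a :: t).length :=
      List.idxOf_lt_length_iff.mpr (foldr_max_mem _ (by simp))
    simp only [List.foldr_cons, List.length_cons] at hm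
    congr 1
    · exact toTreeLAux_fuel t.length _
        (by simp only [List.foldr_cons, List.length_take, List.length_cons]; omega) _
        (by simp only [List.foldr_cons, List.length_take, List.length_cons]; omega)
    · exact toTreeLAux_fuel t.length _
        (by simp only [List.foldr_cons, List.length_drop, List.length_cons]; omega) _
        (by simp only [List.foldr_cons, List.length_drop, List.length_cons]; omega)

lemma rootLabel_toTreeL (l : List ℕ) (h : l ≠ []) :
    rootLabel? (toTreeL l) = some (l.foldr max 0) := by
  rw [toTreeL_unfold l h]; rfl

lemma getElem_congr' (l : List ℕ) {i j : ℕ} (h : i = j) (hi : i < l.length) :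
    l[i] = l[j]'(h ▸ hi) := by subst h; rfl

lemma nearest_greater_left (l : List ℕ) (x α : ℕ) :
    ∀ i, i < α → x < l.getD i 0 →
    ∃ γ, γ < α ∧ x < l.getD γ 0 ∧ ∀ t, γ < t → t < α → l.getD t 0 ≤ x := by
  intro i hiα hgt
  refine ⟨Nat.findGreatest (fun j => x < l.getD j 0) (α-1), ?_, ?_, ?_⟩
  · exact lt_of_le_of_lt (Nat.findGreatest_le (P := fun j => x < l.getD j 0) _) (by omega)
  · exact Nat.findGreatest_spec (P := fun j => x < l.getD j 0) (m := i) (by omega) hgt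
  · intro t hγt htα
    exact not_lt.mp (Nat.findGreatest_is_greatest (P := fun j => x < l.getD j 0) hγt (by omega))

lemma nearest_greater_right (l : List ℕ) (x α : ℕ) :
    ∀ i, α < i → i < l.length → x < l.getD i 0 →
    ∃ γ, α < γ ∧ γ < l.length ∧ x < l.getD γ 0 ∧ ∀ t, α < t → t < γ → l.getD t 0 ≤ x := by
  intro i h1 h2 h3
  have hex : ∃ j, α < j ∧ j < l.length ∧ x < l.getD j 0 := ⟨i, h1, h2, h3⟩
  obtain ⟨g1, g2, g3⟩ := Nat.find_spec hex
  refine ⟨Nat.find hex, g1, g2, g3, ?_⟩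
  intro t ht1 ht2
  have h4 := Nat.find_min hex ht2
  simp only [not_and, not_lt] at h4
  exact h4 ht1 (by omega)

set_option maxHeartbeats 1000000 in
lemma parent_main (N : ℕ) : ∀ l : List ℕ, l.length ≤ N → l.Nodup →
    ∀ α β, ∀ hα : α < l.length, ∀ hβ : β < l.length,
    l[α] < l[β] →
    (∀ t, ∀ ht : t < l.length, min α β < t → t < max α β → l[t] < l[α]) →
    (∀ β', ∀ hβ' : β' < l.length, l[α] < l[β'] →
      (∀ t, ∀ ht : t < l.length, min α β' < t → t < max α β' → l[t] < l[α]) → l[β] ≤ l[β']) →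
    IsParent (toTreeL l) l[β] l[α] := by
  induction N with
  | zero => intro l hl _ α β hα _ _ _ _; omega
  | succ N ih =>
    intro l hl hnd α β hα hβ h1 h2 h3
    have hne : l ≠ [] := by rintro rfl; simp at hα
    have hm : l.idxOf (l.foldr max 0) < l.length :=
      List.idxOf_lt_length_iff.mpr (foldr_max_mem _ hne)
    set M := l.foldr max 0 with hM
    set m := l.idxOf M with hmdef
    have hlm : l[m] = M := List.getElem_idxOf hm
    have hle : ∀ i, ∀ hi : i < l.length, l[i] ≤ M := fun i hi => le_foldr_max _ (List.getElem_mem _)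
    have inj : ∀ i j, ∀ hi : i < l.length, ∀ hj : j < l.length, l[i] = l[j] → i = j :=
      fun i j hi hj h => (hnd.getElem_inj_iff).mp h
    have hαm : α ≠ m := by
      intro h
      have : l[α] = M := by subst h; exact hlm
      have := hle β hβ
      omega
    rw [toTreeL_unfold l hne, ← hM, ← hmdef]
    -- rule out m strictly between α and β
    have hDm : ¬ (min α β < m ∧ m < max α β) := by
      rintro ⟨hd1, hd2⟩
      have := h2 m hm hd1 hd2
      have := hle β hβ
      omega
    rcases lt_trichotomy β m with hβm | hβm | hβm
    · rcases lt_trichotomy α m with hαm' | h | hαm'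
      · -- Case A : both left
        refine Or.inr (Or.inl ?_)
        have hlt : (l.take m).length = m := by rw [List.length_take]; omega
        have hαt : α < (l.take m).length := by omega
        have hβt : β < (l.take m).length := by omega
        have gtk : ∀ i, ∀ hi : i < (l.take m).length, (l.take m)[i] = l[i]'(by omega) :=
          fun i hi => List.getElem_take
        have eα := gtk α hαt
        have eβ := gtk β hβt
        have key := ih (l.take m) (by omega) (hnd.sublist (List.take_sublist _ _)) α β hαt hβt
          (by omega)
          (by
            intro t ht hmin hmax
            have et := gtk t ht
            have := h2 t (by omega) hmin hmax
            omega)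
          (by
            intro c hc hgt hbet
            have ec := gtk c hc
            have hg' : l[α] < l[c]'(by omega) := by omega
            have hb' : ∀ t, ∀ ht : t < l.length, min α c < t → t < max α c → l[t] < l[α] := by
              intro t ht hmin hmax
              have htm : t < (l.take m).length := by omega
              have et := gtk t htm
              have := hbet t htm hmin hmax
              omega
            have := h3 c (by omega) hg' hb'
            omega)
        rw [eα, eβ] at key
        exact key
      · exact absurd h hαm
      · exact absurd ⟨by omega, by omega⟩ hDm
    · -- Case C : β = m
      have hlβ : l[β] = M := (getElem_congr' l hβm hβ).trans hlm
      refine Or.inl ⟨hlβ, ?_⟩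
      rcases lt_trichotomy α m with hαm' | h | hαm'
      · -- α left of the maximum : l[α] is the max of l.take m
        left
        have hmax' : ∀ i, ∀ hi : i < m, l[i] ≤ l[α] := by
          by_contra hcon
          push_neg at hcon
          obtain ⟨i, hi, hgt⟩ := hcon
          rcases lt_trichotomy i α with hiα | heq | hiα
          · -- nearest greater to the left exists : contradiction with minimality
            have hgtD : l[α] < l.getD i 0 := by
              rw [List.getD_eq_getElem _ _ (show i < l.length by omega)]; exact hgt
            obtain ⟨γ, hγα, hγgt, hγbet⟩ := nearest_greater_left l (l[α]) α i hiα hgtD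
            have hγlen : γ < l.length := by omega
            have hγval : l.getD γ 0 = l[γ] := List.getD_eq_getElem _ _ hγlen
            have hbetween : ∀ t, ∀ ht : t < l.length, min α γ < t → t < max α γ →
                l[t] < l[α] := by
              intro t ht hmin hmax
              have h7 := hγbet t (by omega) (by omega)
              have h8 : l.getD t 0 = l[t] := List.getD_eq_getElem _ _ (by omega)
              have hne' : l[t]'(by omega) ≠ l[α] := by
                intro h
                have := inj t α (by omega) hα h
                omega
              omega
            have hcand := h3 γ hγlen (by omega) hbetween
            have h5 := hle γ hγlen
            have h6 : l[γ] ≠ M := by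
              intro h
              have := inj γ m hγlen hm (h.trans hlm.symm)
              omega
            omega
          · subst heq; exact lt_irrefl _ hgt
          · -- α < i < m : contradiction with h2
            have := h2 i (by omega) (by omega) (by omega)
            omega
        have htne : l.take m ≠ [] := by
          intro h
          have := congrArg List.length h
          rw [List.length_take, List.length_nil] at this
          omega
        rw [rootLabel_toTreeL _ htne]
        refine congrArg some ?_
        obtain ⟨j, hj, hjv⟩ := List.mem_iff_getElem.mp (foldr_max_mem _ htne)
        have hlt : (l.take m).length = m := by rw [List.length_take]; omega
        have hjm : j < m := by omega
        have hjval : (l.take m)[j]'hj = l[j]'(by omega) := List.getElem_take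
        have hmem : l[α] ∈ l.take m := by
          have h7 : (l.take m)[α]'(by omega) = l[α] := List.getElem_take
          rw [← h7]; exact List.getElem_mem _
        have le2 : l[α] ≤ (l.take m).foldr max 0 := le_foldr_max _ hmem
        have le1 : (l.take m).foldr max 0 ≤ l[α] := by
          rw [← hjv, hjval]; exact hmax' j hjm
        omega
      · exact absurd h hαm
      · -- α right of the maximum : l[α] is the max of l.drop (m+1)
        right
        have hmax' : ∀ i, m < i → ∀ hi : i < l.length, l[i] ≤ l[α] := by
          by_contra hcon
          push_neg at hcon
          obtain ⟨i, him, hi, hgt⟩ := hcon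
          rcases lt_trichotomy i α with hiα | heq | hiα
          · -- m < i < α : contradiction with h2
            have := h2 i (by omega) (by omega) (by omega)
            omega
          · subst heq; exact lt_irrefl _ hgt
          · -- nearest greater to the right exists : contradiction with minimality
            have hgtD : l[α] < l.getD i 0 := by
              rw [List.getD_eq_getElem _ _ hi]; exact hgt
            obtain ⟨γ, hγ1, hγ2, hγgt, hγbet⟩ := nearest_greater_right l (l[α]) α i hiα hi hgtD
            have hγval : l.getD γ 0 = l[γ] := List.getD_eq_getElem _ _ hγ2
            have hbetween : ∀ t, ∀ ht : t < l.length, min α γ < t → t < max α γ →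
                l[t] < l[α] := by
              intro t ht hmin hmax
              have h7 := hγbet t (by omega) (by omega)
              have h8 : l.getD t 0 = l[t] := List.getD_eq_getElem _ _ (by omega)
              have hne' : l[t]'(by omega) ≠ l[α] := by
                intro h
                have := inj t α (by omega) hα h
                omega
              omega
            have hcand := h3 γ hγ2 (by omega) hbetween
            have h5 := hle γ hγ2
            have h6 : l[γ] ≠ M := by
              intro h
              have := inj γ m hγ2 hm (h.trans hlm.symm)
              omega
            omega
        have hdne : l.drop (m+1) ≠ [] := by
          intro h
          have := congrArg List.length h
          rw [List.length_drop, List.length_nil] at this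
          omega
        rw [rootLabel_toTreeL _ hdne]
        refine congrArg some ?_
        obtain ⟨j, hj, hjv⟩ := List.mem_iff_getElem.mp (foldr_max_mem _ hdne)
        have hld : (l.drop (m+1)).length = l.length - (m+1) := List.length_drop
        have hjval : (l.drop (m+1))[j]'hj = l[m+1+j]'(by omega) := List.getElem_drop
        have hmem : l[α] ∈ l.drop (m+1) := by
          have h7 : (l.drop (m+1))[α-(m+1)]'(by omega) = l[α] :=
            (List.getElem_drop).trans
              (getElem_congr' l (show m+1+(α-(m+1)) = α by omega) (by omega))
          rw [← h7]; exact List.getElem_mem _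
        have le2 : l[α] ≤ (l.drop (m+1)).foldr max 0 := le_foldr_max _ hmem
        have le1 : (l.drop (m+1)).foldr max 0 ≤ l[α] := by
          rw [← hjv, hjval]; exact hmax' (m+1+j) (by omega) (by omega)
        omega
    · rcases lt_trichotomy α m with hαm' | h | hαm'
      · exact absurd ⟨by omega, by omega⟩ hDm
      · exact absurd h hαm
      · -- Case B : both right
        refine Or.inr (Or.inr ?_)
        have hld : (l.drop (m+1)).length = l.length - (m+1) := List.length_drop
        have gdr : ∀ i, ∀ hi : i < (l.drop (m+1)).length, (l.drop (m+1))[i] = l[m+1+i]'(by omega) :=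
          fun i hi => List.getElem_drop
        have hαd : α - (m+1) < (l.drop (m+1)).length := by omega
        have hβd : β - (m+1) < (l.drop (m+1)).length := by omega
        have eα : (l.drop (m+1))[α-(m+1)] = l[α] :=
          (gdr (α-(m+1)) hαd).trans (getElem_congr' l (show m+1+(α-(m+1)) = α by omega) (by omega))
        have eβ : (l.drop (m+1))[β-(m+1)] = l[β] :=
          (gdr (β-(m+1)) hβd).trans (getElem_congr' l (show m+1+(β-(m+1)) = β by omega) (by omega))
        have key := ih (l.drop (m+1)) (by omega) (hnd.sublist (List.drop_sublist _ _))
          (α-(m+1)) (β-(m+1)) hαd hβd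
          (by omega)
          (by
            intro t ht hmin hmax
            have et := gdr t ht
            have := h2 (m+1+t) (by omega) (by omega) (by omega)
            omega)
          (by
            intro c hc hgt hbet
            have ec := gdr c hc
            have hg' : l[α] < l[m+1+c]'(by omega) := by omega
            have hb' : ∀ t, ∀ ht : t < l.length, min α (m+1+c) < t → t < max α (m+1+c) →
                l[t] < l[α] := by
              intro t ht hmin hmax
              have htd : t - (m+1) < (l.drop (m+1)).length := by omega
              have et := gdr (t-(m+1)) htd
              have et2 : l[m+1+(t-(m+1))]'(by omega) = l[t] :=
                getElem_congr' l (show m+1+(t-(m+1)) = t by omega) (by omega)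
              have := hbet (t-(m+1)) htd (by omega) (by omega)
              omega
            have := h3 (m+1+c) (by omega) hg' hb'
            omega)
        rw [eα, eβ] at key
        exact key



set_option maxHeartbeats 1000000 in
theorem parent_characterization' {n : ℕ} (σ : Equiv.Perm (Fin n))
    (α β : Fin n)
    (h1 : σ α < σ β)
    (h2 : ∀ t : Fin n, min α β < t → t < max α β → σ t < σ α)
    (h3 : ∀ β' : Fin n, σ α < σ β' →
      (∀ t : Fin n, min α β' < t → t < max α β' → σ t < σ α) → σ β ≤ σ β') :
    IsParent (toTreeL (List.ofFn fun i => ((σ i : ℕ)))) (σ β : ℕ) (σ α : ℕ) := by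
  obtain ⟨l, hldef⟩ : ∃ l', List.ofFn (fun i : Fin n => ((σ i : ℕ))) = l' := ⟨_, rfl⟩
  rw [show (List.ofFn fun i => ((σ i : ℕ))) = l from hldef]
  have hlen : l.length = n := by rw [← hldef]; exact List.length_ofFn
  have hget : ∀ t, ∀ ht : t < l.length, l[t] = ((σ ⟨t, by omega⟩ : Fin n) : ℕ) := by
    intro t ht
    have h9 : t < (List.ofFn fun i : Fin n => ((σ i : ℕ))).length := by
      rw [hldef]; exact ht
    have h8 : (List.ofFn fun i : Fin n => ((σ i : ℕ)))[t]'h9 = l[t]'ht := by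
      congr 1
    rw [← h8, List.getElem_ofFn]
  have hnd : l.Nodup := by
    rw [← hldef, List.nodup_ofFn]
    exact fun a b h => σ.injective (Fin.val_injective h)
  have hαl : (α : ℕ) < l.length := by omega
  have hβl : (β : ℕ) < l.length := by omega
  have eα : l[(α : ℕ)] = ((σ α : Fin n) : ℕ) := by
    have h0 := hget (α : ℕ) hαl
    simp only [Fin.eta] at h0
    exact h0
  have eβ : l[(β : ℕ)] = ((σ β : Fin n) : ℕ) := by
    have h0 := hget (β : ℕ) hβl
    simp only [Fin.eta] at h0
    exact h0
  have hminv : ((min α β : Fin n) : ℕ) = min (α : ℕ) (β : ℕ) :=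
    Fin.val_strictMono.monotone.map_min
  have hmaxv : ((max α β : Fin n) : ℕ) = max (α : ℕ) (β : ℕ) :=
    Fin.val_strictMono.monotone.map_max
  have h1' : ((σ α : Fin n) : ℕ) < ((σ β : Fin n) : ℕ) := h1
  have key := parent_main n l (by omega) hnd (α : ℕ) (β : ℕ) hαl hβl
    (by omega)
    (by
      intro t ht hmn hmx
      have et := hget t ht
      have h4 : ((σ ⟨t, by omega⟩ : Fin n) : ℕ) < ((σ α : Fin n) : ℕ) :=
        h2 ⟨t, by omega⟩
          (Fin.lt_def.mpr (show ((min α β : Fin n) : ℕ) < t by omega))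
          (Fin.lt_def.mpr (show t < ((max α β : Fin n) : ℕ) by omega))
      omega)
    (by
      intro c hc hgt hbet
      have ec := hget c hc
      have hminv' : ((min α ⟨c, by omega⟩ : Fin n) : ℕ) = min (α : ℕ) c :=
        Fin.val_strictMono.monotone.map_min
      have hmaxv' : ((max α ⟨c, by omega⟩ : Fin n) : ℕ) = max (α : ℕ) c :=
        Fin.val_strictMono.monotone.map_max
      have h4 : ((σ β : Fin n) : ℕ) ≤ ((σ ⟨c, by omega⟩ : Fin n) : ℕ) :=
        h3 ⟨c, by omega⟩
          (Fin.lt_def.mpr (show ((σ α : Fin n) : ℕ) < ((σ ⟨c, by omega⟩ : Fin n) : ℕ) by omega))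
          (by
            intro t htmn htmx
            have ht' : (t : ℕ) < l.length := by omega
            have et := hget (t : ℕ) ht'
            have h5 := hbet (t : ℕ) ht'
              (by
                have := Fin.lt_def.mp htmn
                omega)
              (by
                have := Fin.lt_def.mp htmx
                omega)
            have h6 : ((σ ⟨(t : ℕ), by omega⟩ : Fin n) : ℕ) < ((σ α : Fin n) : ℕ) := by omega
            have h7 : (⟨(t : ℕ), by omega⟩ : Fin n) = t := Fin.eta _ _
            rw [h7] at h6
            exact h6)
      omega)
  rw [eα, eβ] at key
  exact key

/-- parent characterization in `T(σ)`: for a non-maximal entry `σ_α`, its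
parent is the least value `σ_β` greater than `σ_α` such that all entries strictly between
positions `β` and `α` are less than `σ_α`. -/
theorem parent_characterization {n : ℕ} (σ : Equiv.Perm (Fin n)) (hσ : Avoids132 σ)
    (α β : Fin n) (hα : (σ α : ℕ) < n - 1)
    (h1 : σ α < σ β)
    (h2 : ∀ t : Fin n, min α β < t → t < max α β → σ t < σ α)
    (h3 : ∀ β' : Fin n, σ α < σ β' →
      (∀ t : Fin n, min α β' < t → t < max α β' → σ t < σ α) → σ β ≤ σ β') :
    IsParent (treeOfL σ) (σ β : ℕ) (σ α : ℕ) := by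
  exact parent_characterization' σ α β h1 h2 h3
end

section
/- For any two binary trees T_1, T_2 on n vertices such that the spine structure of T_2 is obtained from that of T_1 by merging two parts, there exists a 132-avoiding permutation σ of {1,…,n} and an index j such that φ = σ^{σ_j} is defined, T(σ) has the same spine structure as T_1, and T(φ) has the same spine structure as T_2. -/
namespace M14

/-- descending run `[t+k-1, ..., t]` -/
def desc (t : ℕ) : ℕ → List ℕ
  | 0 => []
  | k+1 => (t + k) :: desc t k

@[simp] lemma desc_length (t k : ℕ) : (desc t k).length = k := by
  induction k with
  | zero => rfl
  | succ k ih => simp [desc, ih]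

lemma mem_desc {t k x : ℕ} : x ∈ desc t k ↔ t ≤ x ∧ x < t + k := by
  induction k with
  | zero => simp [desc]
  | succ k ih => simp [desc, ih]; omega

lemma desc_getElem {t k i : ℕ} (h : i < k) :
    (desc t k)[i]'(by simp [h]) + (i + 1) = t + k := by
  induction k generalizing i with
  | zero => omega
  | succ k ih =>
    cases i with
    | zero => simp [desc]; omega
    | succ i =>
      have hk : i < k := by omega
      have := ih hk
      simp only [desc, List.getElem_cons_succ]
      omega
lemma desc_append (t x y : ℕ) : desc (t + y) x ++ desc t y = desc t (x + y) := by
  induction x with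
  | zero => simp [desc]
  | succ x ih =>
    have : x + 1 + y = (x + y) + 1 := by omega
    rw [this]
    simp only [desc, List.cons_append, ih]
    congr 1
    omega

/-- sum of parts, each reduced part `k` standing for a part `k+1` -/
def redSum (K : List ℕ) : ℕ := (K.map (· + 1)).sum

@[simp] lemma redSum_nil : redSum [] = 0 := rfl
@[simp] lemma redSum_cons (k : ℕ) (K : List ℕ) : redSum (k :: K) = k + 1 + redSum K := rfl
@[simp] lemma redSum_append (K K' : List ℕ) : redSum (K ++ K') = redSum K + redSum K' := by
  simp [redSum]

/-- the canonical 132-avoiding word with given (reduced) spine parts, values `t,…,t+redSum K-1`;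
head part is the root spine, later parts are nested left subtrees. -/
def V (t : ℕ) : List ℕ → List ℕ
  | [] => []
  | k :: K => V (t + k) K ++ (t + k + redSum K) :: desc t k

@[simp] lemma V_length (K : List ℕ) : ∀ t, (V t K).length = redSum K := by
  induction K with
  | nil => intro t; rfl
  | cons k K ih => intro t; simp [V, ih]; omega

lemma mem_V {K : List ℕ} : ∀ {t x : ℕ}, x ∈ V t K ↔ t ≤ x ∧ x < t + redSum K := by
  induction K with
  | nil => intro t x; simp [V]
  | cons k K ih => intro t x; simp [V, ih, mem_desc]; omega

lemma nodup_desc (t k : ℕ) : (desc t k).Nodup := by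
  induction k with
  | zero => simp [desc]
  | succ k ih =>
    simp only [desc, List.nodup_cons]
    exact ⟨fun h => by have := (mem_desc.mp h).2; omega, ih⟩

lemma nodup_V (K : List ℕ) : ∀ t, (V t K).Nodup := by
  induction K with
  | nil => intro t; simp [V]
  | cons k K ih =>
    intro t
    simp only [V, List.nodup_append, List.nodup_cons]
    refine ⟨ih _, ⟨fun h => by have := (mem_desc.mp h).2; omega, nodup_desc _ _⟩, ?_⟩
    intro x hx y h2 hxy
    have h1 := mem_V.mp hx
    rcases List.mem_cons.mp h2 with h | h
    · omega
    · have := (mem_desc.mp h).2; omega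
lemma le_foldr_max {l : List ℕ} {x : ℕ} (h : x ∈ l) : x ≤ l.foldr max 0 := by
  induction l with
  | nil => simp at h
  | cons a l ih =>
    rcases List.mem_cons.mp h with rfl | h
    · exact le_max_left _ _
    · exact le_trans (ih h) (le_max_right _ _)

lemma foldr_max_le {l : List ℕ} {M : ℕ} (hle : ∀ x ∈ l, x ≤ M) :
    l.foldr max 0 ≤ M := by
  induction l with
  | nil => simp
  | cons a l ih =>
    simp only [List.foldr_cons, max_le_iff]
    exact ⟨hle _ (by simp), ih fun x hx => hle x (by simp [hx])⟩

lemma foldr_max_eq {l : List ℕ} {M : ℕ} (hM : M ∈ l) (hle : ∀ x ∈ l, x ≤ M) :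
    l.foldr max 0 = M :=
  le_antisymm (foldr_max_le hle) (le_foldr_max hM)

lemma indexOf_append_cons {l₁ l₂ : List ℕ} {M : ℕ} (h : M ∉ l₁) :
    (l₁ ++ M :: l₂).idxOf M = l₁.length := by
  induction l₁ with
  | nil => simp
  | cons a l ih =>
    have ha : a ≠ M := fun hh => h (by simp [hh])
    simp only [List.cons_append, List.length_cons]
    rw [List.idxOf_cons_ne _ ha, ih (fun hh => h (by simp [hh]))]
lemma foldr_max_mem : ∀ {l : List ℕ}, l ≠ [] → l.foldr max 0 ∈ l := by
  intro l
  induction l with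
  | nil => simp
  | cons a l ih =>
    intro _
    rcases Decidable.eq_or_ne l [] with rfl | hne
    · simp
    · simp only [List.foldr_cons]
      rcases max_cases a (l.foldr max 0) with ⟨h1, _⟩ | ⟨h1, _⟩
      · rw [h1]; simp
      · rw [h1]; exact List.mem_cons_of_mem _ (ih hne)

lemma toTreeAux_nil (fuel : ℕ) : toTreeAux fuel [] = Tree.nil := by
  cases fuel <;> rfl

lemma toTreeAux_cons (fuel : ℕ) (x : ℕ) (xs : List ℕ) :
    toTreeAux (fuel + 1) (x :: xs) =
      Tree.node () (toTreeAux fuel ((x :: xs).take ((x :: xs).idxOf ((x :: xs).foldr max 0))))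
        (toTreeAux fuel ((x :: xs).drop (((x :: xs).idxOf ((x :: xs).foldr max 0)) + 1))) :=
  rfl

lemma toTreeAux_stable : ∀ (N f₁ f₂ : ℕ) (l : List ℕ), l.length ≤ N → l.length ≤ f₁ →
    l.length ≤ f₂ → toTreeAux f₁ l = toTreeAux f₂ l := by
  intro N
  induction N with
  | zero =>
    intro f₁ f₂ l hN _ _
    have : l = [] := List.eq_nil_of_length_eq_zero (by omega)
    subst this
    rw [toTreeAux_nil, toTreeAux_nil]
  | succ N ih =>
    intro f₁ f₂ l hN h1 h2
    cases l with
    | nil => rw [toTreeAux_nil, toTreeAux_nil]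
    | cons x xs =>
      have hlen : (x :: xs).length = xs.length + 1 := rfl
      obtain ⟨g₁, rfl⟩ : ∃ g, f₁ = g + 1 := ⟨f₁ - 1, by omega⟩
      obtain ⟨g₂, rfl⟩ : ∃ g, f₂ = g + 1 := ⟨f₂ - 1, by omega⟩
      rw [toTreeAux_cons, toTreeAux_cons]
      have hmem : ((x :: xs).foldr max 0) ∈ (x :: xs) := foldr_max_mem (by simp)
      have hidx : (x :: xs).idxOf ((x :: xs).foldr max 0) < (x :: xs).length :=
        List.idxOf_lt_length_iff.mpr hmem
      set m := (x :: xs).idxOf ((x :: xs).foldr max 0) with hm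
      have ht : ((x :: xs).take m).length ≤ m := by simp [List.length_take]
      have hd : ((x :: xs).drop (m + 1)).length = (x :: xs).length - (m + 1) := by
        simp [List.length_drop]
      rw [ih g₁ g₂ _ (by omega) (by omega) (by omega),
        ih g₁ g₂ ((x :: xs).drop (m + 1)) (by omega) (by omega) (by omega)]

lemma toTreeAux_eq_toTree {l : List ℕ} {fuel : ℕ} (h : l.length ≤ fuel) :
    toTreeAux fuel l = toTree l :=
  toTreeAux_stable fuel fuel l.length l h h (le_refl _)

lemma toTree_split {L D : List ℕ} {M : ℕ} (hL : ∀ x ∈ L, x < M) (hD : ∀ x ∈ D, x < M) :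
    toTree (L ++ M :: D) = Tree.node () (toTree L) (toTree D) := by
  obtain ⟨x, xs, hxs⟩ : ∃ x xs, L ++ M :: D = x :: xs := by
    cases h : L ++ M :: D with
    | nil => exact absurd h (by simp)
    | cons a b => exact ⟨a, b, rfl⟩
  have hfold : (L ++ M :: D).foldr max 0 = M :=
    foldr_max_eq (by simp) (by
      intro y hy
      rcases List.mem_append.mp hy with h | h
      · exact le_of_lt (hL y h)
      · rcases List.mem_cons.mp h with rfl | h
        · exact le_refl _
        · exact le_of_lt (hD y h))
  have hidx : (L ++ M :: D).idxOf M = L.length :=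
    indexOf_append_cons (fun h => lt_irrefl M (hL M h))
  have htake : (L ++ M :: D).take L.length = L := List.take_left
  have hdrop : (L ++ M :: D).drop (L.length + 1) = D := by
    rw [show L.length + 1 = L.length + 1 from rfl, ← List.drop_drop]
    rw [List.drop_left]
    rfl
  have hlen : (L ++ M :: D).length = L.length + D.length + 1 := by simp; omega
  unfold toTree
  rw [hxs] at hfold hidx htake hdrop hlen ⊢
  rw [hlen, toTreeAux_cons, hfold, hidx, htake, hdrop,
    toTreeAux_eq_toTree (by omega), toTreeAux_eq_toTree (by omega)]
  rfl
/-- the right chain with `k` nodes -/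
def chain : ℕ → Tree Unit
  | 0 => Tree.nil
  | k + 1 => Tree.node () Tree.nil (chain k)

@[simp] lemma toTree_nil : toTree ([] : List ℕ) = Tree.nil := rfl

lemma toTree_desc (t : ℕ) : ∀ k, toTree (desc t k) = chain k := by
  intro k
  induction k generalizing t with
  | zero => simp [desc, chain]
  | succ k ih =>
    have : desc t (k + 1) = [] ++ (t + k) :: desc t k := by simp [desc]
    rw [this, toTree_split (by simp) (fun x hx => by have := (mem_desc.mp hx).2; omega)]
    rw [toTree_nil, ih]
    rfl

@[simp] lemma spineAux_chain : ∀ k, spineAux (chain k) = (k, 0) := by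
  intro k
  induction k with
  | zero => rfl
  | succ k ih => simp [chain, spineAux, ih]

lemma spine_V (K : List ℕ) : ∀ t, spineStructure (toTree (V t K)) = ↑(K.map (· + 1)) := by
  induction K with
  | nil => intro t; simp [V, spineStructure, spineAux]
  | cons k K ih =>
    intro t
    have hsplit : toTree (V t (k :: K)) =
        Tree.node () (toTree (V (t + k) K)) (toTree (desc t k)) := by
      show toTree (V (t + k) K ++ (t + k + redSum K) :: desc t k) = _
      exact toTree_split (fun x hx => by have := (mem_V.mp hx); omega)
        (fun x hx => by have := (mem_desc.mp hx).2; omega)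
    rw [hsplit, toTree_desc]
    show spineStructure (Tree.node () (toTree (V (t + k) K)) (chain k)) = _
    unfold spineStructure spineAux
    simp only [spineAux_chain]
    have hrec := ih (t + k)
    unfold spineStructure at hrec
    simp only [add_zero]
    rw [if_neg (Nat.succ_ne_zero k)]
    simp only [List.map_cons]
    rw [← Multiset.cons_coe]
    congr 1
lemma spineAux_sum {α : Type*} : ∀ t : Tree α, (spineAux t).1 + (spineAux t).2.sum = t.numNodes := by
  intro t
  induction t with
  | nil => rfl
  | node v L R ihL ihR =>
    simp only [spineAux, Tree.numNodes, BinaryTree.numNodes]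
    simp only [Tree.numNodes] at ihL ihR
    by_cases h : (spineAux L).1 = 0
    · rw [if_pos h]
      simp only [Multiset.sum_add]
      omega
    · rw [if_neg h]
      simp only [Multiset.sum_add, Multiset.sum_cons]
      omega

lemma spineStructure_sum {α : Type*} (t : Tree α) : (spineStructure t).sum = t.numNodes := by
  unfold spineStructure
  by_cases h : (spineAux t).1 = 0
  · rw [if_pos h]
    have := spineAux_sum t
    omega
  · rw [if_neg h]
    simp only [Multiset.sum_cons]
    have := spineAux_sum t
    omega

lemma zero_not_mem_spineAux_snd {α : Type*} : ∀ t : Tree α, 0 ∉ (spineAux t).2 := by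
  intro t
  induction t with
  | nil => simp [spineAux]
  | node v L R ihL ihR =>
    simp only [spineAux, Multiset.mem_add]
    intro h
    rcases h with h | h
    · by_cases hL : (spineAux L).1 = 0
      · rw [if_pos hL] at h; exact ihL h
      · rw [if_neg hL] at h
        rcases Multiset.mem_cons.mp h with h | h
        · exact hL h.symm
        · exact ihL h
    · exact ihR h

lemma zero_not_mem_spineStructure {α : Type*} (t : Tree α) : 0 ∉ spineStructure t := by
  unfold spineStructure
  by_cases h : (spineAux t).1 = 0
  · rw [if_pos h]; exact zero_not_mem_spineAux_snd t
  · rw [if_neg h]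
    intro hm
    rcases Multiset.mem_cons.mp hm with hh | hh
    · exact h hh.symm
    · exact zero_not_mem_spineAux_snd t hh
/-- list-level 132-avoidance -/
def AvL (l : List ℕ) : Prop :=
  ∀ a b c : ℕ, a < b → b < c → c < l.length →
    ¬ (l.getD a 0 < l.getD c 0 ∧ l.getD c 0 < l.getD b 0)

lemma avL_V (K : List ℕ) : ∀ t, AvL (V t K) := by
  induction K with
  | nil => intro t a b c hab hbc hc; simp [V] at hc
  | cons k K ih =>
    intro t a b c hab hbc hc
    set s := redSum K with hsdef
    set m := t + k + s with hmdef
    set L := V (t + k) K with hLdef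
    have hLlen : L.length = s := V_length K (t + k)
    have hller : (V t (k :: K)) = L ++ m :: desc t k := rfl
    have hlen : (V t (k :: K)).length = s + 1 + k := by
      rw [hller]; simp [hLlen]; omega
    -- getD facts
    have hget_lt : ∀ (x : ℕ), x < s → (V t (k :: K)).getD x 0 = L.getD x 0 := by
      intro x hx
      rw [hller, List.getD_eq_getElem?_getD, List.getD_eq_getElem?_getD,
        List.getElem?_append_left (by omega)]
    have hget_eq : (V t (k :: K)).getD s 0 = m := by
      rw [hller, List.getD_eq_getElem?_getD, List.getElem?_append_right (by omega), hLlen]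
      simp
    have hget_gt : ∀ (x : ℕ), s < x → x < s + 1 + k →
        (V t (k :: K)).getD x 0 + (x - s) = t + k := by
      intro x hx1 hx2
      rw [hller, List.getD_eq_getElem?_getD, List.getElem?_append_right (by omega), hLlen,
        show x - s = (x - s - 1) + 1 from by omega, List.getElem?_cons_succ,
        ← List.getD_eq_getElem?_getD, List.getD_eq_getElem (desc t k) 0 (by simp; omega)]
      have := desc_getElem (t := t) (k := k) (i := x - s - 1) (by omega)
      omega
    have hLbound : ∀ y : ℕ, y < s → t + k ≤ L.getD y 0 ∧ L.getD y 0 < m := by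
      intro y hy
      rw [List.getD_eq_getElem _ _ (by omega)]
      have : L[y]'(by omega) ∈ L := List.getElem_mem _
      have := mem_V.mp this
      omega
    rw [hlen] at hc
    rintro ⟨h1, h2⟩
    rcases lt_trichotomy c s with hcs | hcs | hcs
    · rw [hget_lt c (by omega)] at h1 h2
      rw [hget_lt a (by omega)] at h1
      rw [hget_lt b (by omega)] at h2
      exact ih (t + k) a b c hab hbc (by rw [← hLdef, hLlen]; omega) ⟨h1, h2⟩
    · subst hcs
      rw [hget_eq, hget_lt b (by omega)] at h2
      have := (hLbound b (by omega)).2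
      omega
    · have hc' := hget_gt c hcs (by omega)
      rcases lt_trichotomy a s with has | has | has
      · rw [hget_lt a has] at h1
        have := (hLbound a has).1
        omega
      · rw [has, hget_eq] at h1
        omega
      · have ha' := hget_gt a has (by omega)
        have hb' := hget_gt b (by omega) (by omega)
        omega
/-- the permutation determined by a list enumerating `{0,…,n-1}` -/
noncomputable def permOf (n : ℕ) (l : List ℕ) (hlen : l.length = n) (hnd : l.Nodup)
    (hval : ∀ x ∈ l, x < n) : Equiv.Perm (Fin n) :=
  Equiv.ofBijective
    (fun i => (⟨l[(i : ℕ)]'(by rw [hlen]; exact i.isLt),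
      hval _ (List.getElem_mem _)⟩ : Fin n))
    (Finite.injective_iff_bijective.mp (fun i j h => by
      apply Fin.ext
      exact (hnd.getElem_inj_iff).mp (congrArg Fin.val h)))

lemma permOf_val {n : ℕ} {l : List ℕ} (hlen : l.length = n) (hnd : l.Nodup)
    (hval : ∀ x ∈ l, x < n) (i : Fin n) :
    ((permOf n l hlen hnd hval) i : ℕ) = l.getD i 0 := by
  rw [List.getD_eq_getElem _ _ (by rw [hlen]; exact i.isLt)]
  rfl

lemma treeOf_permOf {n : ℕ} {l : List ℕ} (hlen : l.length = n) (hnd : l.Nodup)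
    (hval : ∀ x ∈ l, x < n) :
    treeOf (permOf n l hlen hnd hval) = toTree l := by
  subst hlen
  unfold treeOf
  congr 1
  have : (fun i : Fin l.length => ((permOf l.length l rfl hnd hval) i : ℕ))
      = fun i : Fin l.length => l[(i : ℕ)]'i.isLt := by
    funext i
    rfl
  rw [this, List.ofFn_getElem]

lemma avoids_permOf {n : ℕ} {l : List ℕ} (hlen : l.length = n) (hnd : l.Nodup)
    (hval : ∀ x ∈ l, x < n) (hAv : AvL l) :
    Avoids132 (permOf n l hlen hnd hval) := by
  rintro ⟨a, b, c, hab, hbc, h1, h2⟩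
  have hab' : (a : ℕ) < b := hab
  have hbc' : (b : ℕ) < c := hbc
  refine hAv a b c hab' hbc' (by rw [hlen]; exact c.isLt) ⟨?_, ?_⟩
  · rw [← permOf_val hlen hnd hval a, ← permOf_val hlen hnd hval c]; exact h1
  · rw [← permOf_val hlen hnd hval b, ← permOf_val hlen hnd hval c]; exact h2
/-- the part of the word contributed by the outer parts `K`, around an inner block of
reduced-sum `s` -/
def tailF : ℕ → List ℕ → ℕ → List ℕ
  | _, [], _ => []
  | t, k :: K, s => tailF (t + k) K s ++ (t + k + redSum K + s) :: desc t k

lemma V_append (K : List ℕ) : ∀ (t : ℕ) (K' : List ℕ),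
    V t (K ++ K') = V (t + K.sum) K' ++ tailF t K (redSum K') := by
  induction K with
  | nil => intro t K'; simp [tailF, V]
  | cons k K ih =>
    intro t K'
    show V (t + k) (K ++ K') ++ (t + k + redSum (K ++ K')) :: desc t k = _
    rw [ih (t + k) K']
    rw [List.append_assoc]
    show _ = V (t + (k :: K).sum) K' ++ (tailF (t + k) K (redSum K') ++
      (t + k + redSum K + redSum K') :: desc t k)
    have e1 : t + k + K.sum = t + (k :: K).sum := by simp [List.sum_cons]; omega
    have e2 : t + k + redSum (K ++ K') = t + k + redSum K + redSum K' := by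
      rw [redSum_append]; omega
    rw [e1, e2]

lemma V_single (u p : ℕ) : V u [p] = desc u (p + 1) := by
  show V (u + p) [] ++ (u + p + redSum []) :: desc u p = _
  simp [V, desc, redSum]

lemma V_pair (u kb ka : ℕ) :
    V u [kb, ka] = desc (u + kb) (ka + 1) ++ (u + kb + (ka + 1)) :: desc u kb := by
  show V (u + kb) [ka] ++ (u + kb + redSum [ka]) :: desc u kb = _
  rw [V_single]
  rfl
end M14

open M14 in
/-- any merging of two parts of a spine structure is realized by a shift
move on some 132-avoiding permutation. -/
theorem merge_realized_by_shift {n : ℕ} (T₁ T₂ : Tree Unit)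
    (h₁ : T₁.numNodes = n) (h₂ : T₂.numNodes = n)
    (hm : ∃ (S : Multiset ℕ) (a b : ℕ),
      spineStructure T₁ = a ::ₘ b ::ₘ S ∧ spineStructure T₂ = (a + b) ::ₘ S) :
    ∃ (σ φ : Equiv.Perm (Fin n)) (i j : Fin n),
      Avoids132 σ ∧ IsShift σ φ i j ∧
      spineStructure (treeOf σ) = spineStructure T₁ ∧
      spineStructure (treeOf φ) = spineStructure T₂ := by
  obtain ⟨S, a, b, hT1, hT2⟩ := hm
  have hpa : a ≠ 0 := fun h => zero_not_mem_spineStructure T₁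
    (by rw [hT1, ← h]; exact Multiset.mem_cons_self _ _)
  have hpb : b ≠ 0 := fun h => zero_not_mem_spineStructure T₁
    (by rw [hT1, ← h]; exact Multiset.mem_cons.mpr (Or.inr (Multiset.mem_cons_self _ _)))
  have hpS : ∀ x ∈ S, x ≠ 0 := fun x hx h => zero_not_mem_spineStructure T₁
    (by rw [hT1, ← h]; exact Multiset.mem_cons.mpr (Or.inr (Multiset.mem_cons.mpr (Or.inr hx))))
  obtain ⟨Ls, hLs⟩ := S.exists_rep
  have hLs' : S = ↑Ls := hLs.symm
  obtain ⟨ka, rfl⟩ : ∃ ka, a = ka + 1 := ⟨a - 1, by omega⟩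
  obtain ⟨kb, rfl⟩ : ∃ kb, b = kb + 1 := ⟨b - 1, by omega⟩
  set Ks : List ℕ := Ls.map (· - 1) with hKsdef
  have hKs : Ks.map (· + 1) = Ls := by
    rw [hKsdef, List.map_map]
    have : ∀ x ∈ Ls, (((· + 1) ∘ (· - 1)) x) = id x := by
      intro x hx
      have : x ≠ 0 := hpS x (by rw [hLs']; exact Multiset.mem_coe.mpr hx)
      simp only [Function.comp, id_eq]
      omega
    rw [List.map_congr_left this, List.map_id]
  have hredKs : redSum Ks = Ls.sum := by
    unfold redSum
    rw [hKs]
  set Kσ : List ℕ := Ks ++ [kb, ka] with hKσdef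
  set Kφ : List ℕ := Ks ++ [ka + kb + 1] with hKφdef
  have hredσ : redSum Kσ = Ls.sum + (ka + kb + 2) := by
    rw [hKσdef, redSum_append, hredKs]; simp [redSum]
    try omega
  have hredφ : redSum Kφ = Ls.sum + (ka + kb + 2) := by
    rw [hKφdef, redSum_append, hredKs]; simp [redSum]
    try omega
  have hsum : n = Ls.sum + (ka + kb + 2) := by
    have hss := spineStructure_sum T₁
    rw [hT1, h₁] at hss
    simp only [Multiset.sum_cons] at hss
    have : S.sum = Ls.sum := by rw [hLs']; exact Multiset.sum_coe Ls
    omega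
  set ts : ℕ := Ks.sum with htsdef
  set u : ℕ := ts + kb with hudef
  set Mv : ℕ := u + (ka + 1) with hMdef
  set R : List ℕ := desc u (ka + 1) with hRdef
  set Z : List ℕ := desc ts kb ++ tailF 0 Ks (ka + kb + 2) with hZdef
  have hRlen : R.length = ka + 1 := desc_length _ _
  have hred2 : redSum [kb, ka] = ka + kb + 2 := by simp [redSum]; try omega
  have hred3 : redSum [ka + kb + 1] = ka + kb + 2 := by simp [redSum]; try omega
  have hlσ : V 0 Kσ = R ++ Mv :: Z := by
    rw [hKσdef, V_append, V_pair, hred2]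
    simp only [Nat.zero_add, List.append_assoc, List.cons_append]
    rfl
  have hlφ : V 0 Kφ = Mv :: (R ++ Z) := by
    rw [hKφdef, V_append, V_single, hred3, Nat.zero_add]
    show ((ts + (ka + kb + 1)) :: desc ts (ka + kb + 1)) ++ _ = _
    have e2 : ts + (ka + 1 + kb) = Mv := by rw [hMdef, hudef]; omega
    rw [show ka + kb + 1 = ka + 1 + kb from by omega, ← desc_append ts (ka + 1) kb, e2]
    simp only [List.append_assoc, List.cons_append]
    rfl
  have hlenσ : (V 0 Kσ).length = n := by rw [V_length, hredσ]; omega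
  have hlenφ : (V 0 Kφ).length = n := by rw [V_length, hredφ]; omega
  have hvalσ : ∀ x ∈ V 0 Kσ, x < n := by
    intro x hx; have := mem_V.mp hx; omega
  have hvalφ : ∀ x ∈ V 0 Kφ, x < n := by
    intro x hx; have := mem_V.mp hx; omega
  set σp : Equiv.Perm (Fin n) := permOf n (V 0 Kσ) hlenσ (nodup_V Kσ 0) hvalσ with hσdef
  set φp : Equiv.Perm (Fin n) := permOf n (V 0 Kφ) hlenφ (nodup_V Kφ 0) hvalφ with hφdef
  have hn2 : ka + 1 < n := by omega
  have hn0 : 0 < n := by omega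
  -- getD facts
  have F1 : ∀ x : ℕ, x ≤ ka → (V 0 Kσ).getD x 0 + (x + 1) = Mv := by
    intro x hx
    rw [hlσ, List.getD_eq_getElem?_getD, List.getElem?_append_left (by rw [hRlen]; omega),
      ← List.getD_eq_getElem?_getD, hRdef, List.getD_eq_getElem _ _ (by simp; omega)]
    have := desc_getElem (t := u) (k := ka + 1) (i := x) (by omega)
    omega
  have F2 : (V 0 Kσ).getD (ka + 1) 0 = Mv := by
    rw [hlσ, List.getD_eq_getElem?_getD, List.getElem?_append_right (by rw [hRlen]), hRlen]
    simp
  have F3 : ∀ s' : ℕ, (V 0 Kσ).getD (ka + 2 + s') 0 = Z.getD s' 0 := by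
    intro s'
    rw [hlσ, List.getD_eq_getElem?_getD, List.getElem?_append_right (by rw [hRlen]; omega),
      hRlen, show ka + 2 + s' - (ka + 1) = s' + 1 from by omega, List.getElem?_cons_succ,
      ← List.getD_eq_getElem?_getD]
  have G1 : (V 0 Kφ).getD 0 0 = Mv := by rw [hlφ]; rfl
  have G2 : ∀ x : ℕ, x ≤ ka → (V 0 Kφ).getD (x + 1) 0 = (V 0 Kσ).getD x 0 := by
    intro x hx
    rw [hlφ, List.getD_cons_succ, hlσ, List.getD_eq_getElem?_getD, List.getD_eq_getElem?_getD,
      List.getElem?_append_left (by rw [hRlen]; omega),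
      List.getElem?_append_left (by rw [hRlen]; omega)]
  have G3 : ∀ s' : ℕ, (V 0 Kφ).getD (ka + 2 + s') 0 = Z.getD s' 0 := by
    intro s'
    rw [hlφ, show ka + 2 + s' = (ka + 1 + s') + 1 from by omega, List.getD_cons_succ,
      List.getD_eq_getElem?_getD, List.getElem?_append_right (by rw [hRlen]; omega), hRlen,
      show ka + 1 + s' - (ka + 1) = s' from by omega, ← List.getD_eq_getElem?_getD]
  refine ⟨σp, φp, ⟨0, hn0⟩, ⟨ka + 1, hn2⟩,
    avoids_permOf hlenσ (nodup_V Kσ 0) hvalσ (avL_V Kσ 0),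
    ⟨⟨?_, ?_, ?_, ?_⟩, ?_, ?_, ?_, ?_⟩, ?_, ?_⟩
  · exact Fin.mk_lt_mk.mpr (by omega)
  · -- σ i < σ j
    rw [Fin.lt_def, hσdef, permOf_val, permOf_val]
    have e0 := F1 0 (by omega)
    simp only [Fin.val_mk] at *
    rw [F2] at *
    omega
  · intro x hx
    have h' := Fin.lt_def.mp hx
    simp only [Fin.val_mk] at h'
    exact absurd h' (Nat.not_lt_zero _)
  · intro bb h1 h2
    rw [Fin.lt_def] at h1 h2 ⊢
    simp only [Fin.val_mk] at h1 h2
    rw [hσdef, permOf_val, permOf_val]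
    simp only [Fin.val_mk]
    have e0 := F1 0 (by omega)
    have e1 := F1 bb.val (by omega)
    omega
  · intro t ht
    have h' := Fin.lt_def.mp ht
    simp only [Fin.val_mk] at h'
    exact absurd h' (Nat.not_lt_zero _)
  · -- φ i = σ j
    apply Fin.ext
    rw [hσdef, hφdef, permOf_val, permOf_val]
    simp only [Fin.val_mk]
    rw [G1, F2]
  · intro t ht h
    apply Fin.ext
    rw [hσdef, hφdef, permOf_val, permOf_val]
    simp only [Fin.val_mk]
    have hle : (t : ℕ) ≤ ka := by
      have := Fin.lt_def.mp h
      simp only [Fin.val_mk] at this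
      omega
    exact G2 t.val hle
  · intro t ht
    have hgt : ka + 1 < (t : ℕ) := by
      have := Fin.lt_def.mp ht
      simpa using this
    obtain ⟨s', hs'⟩ : ∃ s', (t : ℕ) = ka + 2 + s' := ⟨(t : ℕ) - (ka + 2), by omega⟩
    apply Fin.ext
    rw [hσdef, hφdef, permOf_val, permOf_val, hs', F3, G3]
  · -- spine of σ
    rw [hσdef, treeOf_permOf, spine_V, hT1, hLs']
    have e : Kσ.map (· + 1) = Ls ++ [kb + 1, ka + 1] := by
      rw [hKσdef, List.map_append, hKs]
      rfl
    rw [e]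
    show ((Ls ++ [kb + 1, ka + 1] : List ℕ) : Multiset ℕ) = (ka + 1) ::ₘ (kb + 1) ::ₘ ↑Ls
    rw [← Multiset.coe_add]
    simp only [← Multiset.cons_coe, Multiset.add_cons, Multiset.coe_nil, add_zero]
    exact Multiset.cons_swap _ _ _
  · -- spine of φ
    rw [hφdef, treeOf_permOf, spine_V, hT2, hLs']
    have e : Kφ.map (· + 1) = Ls ++ [ka + kb + 2] := by
      rw [hKφdef, List.map_append, hKs]
      rfl
    rw [e]
    have e2 : ka + 1 + (kb + 1) = ka + kb + 2 := by omega
    rw [e2]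
    show ((Ls ++ [ka + kb + 2] : List ℕ) : Multiset ℕ) = (ka + kb + 2) ::ₘ ↑Ls
    rw [← Multiset.coe_add]
    simp only [← Multiset.cons_coe, Multiset.add_cons, Multiset.coe_nil, add_zero]
end
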